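/- arXiv:1506.02500 — 7 statements merged into one kernel-verified Lean document; each statement's English description precedes it below -/
import Mathlib

section
/- Let 0 < β < 1. There exist natural numbers h₁, h₂ depending only on β (and n) such that: for every cube Q = Q(x,l) ∈ F_β with 10Q ∉ F_β, if k₀ ∈ ℤ satisfies 2^{k₀-1} ≤ d_∞(x, Ω^c) < 2^{k₀}, then every point y in the cloud N_β(Q) satisfies 2^{k₀-h₁-1} ≤ d_∞(y, Ω^c) < 2^{k₀+h₂}. -/
open MeasureTheory Metric Set
open scoped ENNReal

noncomputable section

/-- The cube `Q(x,l)` with center `x` and half side length `l`, i.e. the closed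
ball of radius `l` in the sup metric `d_∞` on `Fin n → ℝ`. -/
def Cube {n : ℕ} (x : Fin n → ℝ) (l : ℝ) : Set (Fin n → ℝ) :=
  Metric.closedBall x l

/-- `Q(x,l)` belongs to the family `F_β` of cubes well inside `Ω`. -/
def MemF {n : ℕ} (Ω : Set (Fin n → ℝ)) (β : ℝ) (x : Fin n → ℝ) (l : ℝ) : Prop :=
  x ∈ Ω ∧ 0 < l ∧ l < β * Metric.infDist x Ωᶜ

/-- `w(E) = ∫_E w dx` for a weight `w`. -/
def wMeas {n : ℕ} (w : (Fin n → ℝ) → ℝ) (E : Set (Fin n → ℝ)) : ℝ≥0∞ :=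
  ∫⁻ y in E, ENNReal.ofReal (w y)

/-- The average `|Q|⁻¹ ∫_Q |f|`. -/
def avgI {n : ℕ} (f : (Fin n → ℝ) → ℝ) (Q : Set (Fin n → ℝ)) : ℝ≥0∞ :=
  (volume Q)⁻¹ * ∫⁻ y in Q, ENNReal.ofReal |f y|

/-- The local (uncentered) maximal function `M_β f`. -/
def locMax {n : ℕ} (Ω : Set (Fin n → ℝ)) (β : ℝ) (f : (Fin n → ℝ) → ℝ)
    (x : Fin n → ℝ) : ℝ≥0∞ :=
  ⨆ (c : Fin n → ℝ) (l : ℝ) (_ : MemF Ω β c l) (_ : x ∈ Cube c l), avgI f (Cube c l)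

/-- The centered local maximal function `M_β^c f`. -/
def locMaxC {n : ℕ} (Ω : Set (Fin n → ℝ)) (β : ℝ) (f : (Fin n → ℝ) → ℝ)
    (x : Fin n → ℝ) : ℝ≥0∞ :=
  ⨆ (l : ℝ) (_ : MemF Ω β x l), avgI f (Cube x l)

/-- A weight: a nonnegative (measurable) locally integrable function on `Ω`. -/
def IsWeight {n : ℕ} (Ω : Set (Fin n → ℝ)) (w : (Fin n → ℝ) → ℝ) : Prop :=
  (∀ x, 0 ≤ w x) ∧ Measurable w ∧ LocallyIntegrableOn w Ω

/-- `σ = v^{1-p'} = v^{-1/(p-1)}`. -/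
def sigW {n : ℕ} (v : (Fin n → ℝ) → ℝ) (p : ℝ) : (Fin n → ℝ) → ℝ :=
  fun y => v y ^ (-(1 / (p - 1)))

/-- The class `A_{p,q}^β`: `(u(Q)/|Q|)^{p/q} (σ(Q)/|Q|)^{p-1} ≤ C` for `Q ∈ F_β`. -/
def Apq {n : ℕ} (Ω : Set (Fin n → ℝ)) (β p q : ℝ) (u v : (Fin n → ℝ) → ℝ) : Prop :=
  ∃ C : ℝ≥0∞, C ≠ ⊤ ∧ ∀ x l, MemF Ω β x l →
    (wMeas u (Cube x l) / volume (Cube x l)) ^ (p / q) *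
      (wMeas (sigW v p) (Cube x l) / volume (Cube x l)) ^ (p - 1) ≤ C

/-- The class `D_β`: `w(2Q) ≤ C w(Q) < ∞` for all `Q ∈ F_β` with `2Q ∈ F_β`. -/
def Dbeta {n : ℕ} (Ω : Set (Fin n → ℝ)) (β : ℝ) (w : (Fin n → ℝ) → ℝ) : Prop :=
  ∃ C : ℝ≥0∞, C ≠ ⊤ ∧ ∀ x l, MemF Ω β x l → MemF Ω β x (2 * l) →
    wMeas w (Cube x (2 * l)) ≤ C * wMeas w (Cube x l) ∧ wMeas w (Cube x l) < ⊤

/-- The class `A_∞^β`: `w(E)/w(Q) ≤ c (|E|/|Q|)^δ` for measurable `E ⊆ Q ∈ F_β`. -/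
def AinfB {n : ℕ} (Ω : Set (Fin n → ℝ)) (β : ℝ) (w : (Fin n → ℝ) → ℝ) : Prop :=
  ∃ c δ : ℝ, 0 < c ∧ 0 < δ ∧ ∀ x l, MemF Ω β x l → ∀ E : Set (Fin n → ℝ),
    MeasurableSet E → E ⊆ Cube x l →
    wMeas w E ≤ ENNReal.ofReal c * (volume E / volume (Cube x l)) ^ δ * wMeas w (Cube x l)

/-- `M_β : L^p(v) → L^q(u)` is bounded. -/
def MaxBdd {n : ℕ} (Ω : Set (Fin n → ℝ)) (β p q : ℝ) (u v : (Fin n → ℝ) → ℝ) : Prop :=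
  ∃ C : ℝ≥0∞, C ≠ ⊤ ∧ ∀ f : (Fin n → ℝ) → ℝ,
    (∫⁻ x in Ω, (locMax Ω β f x) ^ q * ENNReal.ofReal (u x)) ^ (1 / q)
      ≤ C * (∫⁻ x in Ω, ENNReal.ofReal |f x| ^ p * ENNReal.ofReal (v x)) ^ (1 / p)

/-- `M_β^c : L^p(v) → L^q(u)` is bounded. -/
def MaxCBdd {n : ℕ} (Ω : Set (Fin n → ℝ)) (β p q : ℝ) (u v : (Fin n → ℝ) → ℝ) : Prop :=
  ∃ C : ℝ≥0∞, C ≠ ⊤ ∧ ∀ f : (Fin n → ℝ) → ℝ,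
    (∫⁻ x in Ω, (locMaxC Ω β f x) ^ q * ENNReal.ofReal (u x)) ^ (1 / q)
      ≤ C * (∫⁻ x in Ω, ENNReal.ofReal |f x| ^ p * ENNReal.ofReal (v x)) ^ (1 / p)

/-- The cloud `N_β(Q)` of the cube `Q = Q(x,l)`. -/
def cloud {n : ℕ} (Ω : Set (Fin n → ℝ)) (β : ℝ) (x : Fin n → ℝ) (l : ℝ) :
    Set (Fin n → ℝ) :=
  ⋃ (c : Fin n → ℝ) (r : ℝ) (_ : MemF Ω β c r)
    (_ : (Cube c r ∩ Cube x l).Nonempty), Cube c r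

/-- The center of the usual dyadic cube of side `2^(k+1)` indexed by `z`. -/
def dyCenter {n : ℕ} (k : ℤ) (z : Fin n → ℤ) : Fin n → ℝ :=
  fun i => (2 * (z i : ℝ) + 1) * (2:ℝ) ^ k

/-- The usual (half-open) dyadic cube of side `2^(k+1)` indexed by `z`;
its center is `dyCenter k z` and its half side length is `2^k`. -/
def dyCube {n : ℕ} (k : ℤ) (z : Fin n → ℤ) : Set (Fin n → ℝ) :=
  Set.univ.pi fun i => Ico ((z i : ℝ) * 2 ^ (k + 1)) (((z i : ℝ) + 1) * 2 ^ (k + 1))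

/-- `Q(x,l)` is a usual dyadic cube of `ℝ^n`. -/
def IsDyadic {n : ℕ} (x : Fin n → ℝ) (l : ℝ) : Prop :=
  ∃ (k : ℤ) (z : Fin n → ℤ), l = (2:ℝ) ^ k ∧ x = dyCenter k z

/-- `W` is a covering `W_t` of `Ω` as in the covering lemma: a covering of `Ω`
by pairwise disjoint dyadic cubes `R ∈ F_β` with `10R ∈ F_β` and
`2^{-t-3} d(x_R,Ω^c) ≤ l_R ≤ 2^{-t-1} d(x_R,Ω^c)`, and such that at most `M`
cubes of `W` meet the cloud of any `Q ∈ F_β` with `10Q ∉ F_β`. -/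
def IsWt {n : ℕ} (Ω : Set (Fin n → ℝ)) (β : ℝ) (t : ℕ)
    (W : Set (ℤ × (Fin n → ℤ))) : Prop :=
  (Ω ⊆ ⋃ q ∈ W, dyCube q.1 q.2) ∧
  (W.PairwiseDisjoint fun q => dyCube q.1 q.2) ∧
  (∀ q ∈ W, MemF Ω β (dyCenter q.1 q.2) ((2:ℝ) ^ q.1) ∧
    MemF Ω β (dyCenter q.1 q.2) (10 * (2:ℝ) ^ q.1) ∧
    (2:ℝ) ^ (-(t:ℤ) - 3) * Metric.infDist (dyCenter q.1 q.2) Ωᶜ ≤ (2:ℝ) ^ q.1 ∧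
    (2:ℝ) ^ q.1 ≤ (2:ℝ) ^ (-(t:ℤ) - 1) * Metric.infDist (dyCenter q.1 q.2) Ωᶜ) ∧
  (∃ M : ℕ, ∀ x l, MemF Ω β x l → ¬ MemF Ω β x (10 * l) →
    {q ∈ W | (dyCube q.1 q.2 ∩ cloud Ω β x l).Nonempty}.Finite ∧
    {q ∈ W | (dyCube q.1 q.2 ∩ cloud Ω β x l).Nonempty}.ncard ≤ M)

/-- `W_{t,Q}`: the union of the cubes of `W` meeting the cloud of `Q = Q(x,l)`. -/
def WtQ {n : ℕ} (Ω : Set (Fin n → ℝ)) (β : ℝ) (W : Set (ℤ × (Fin n → ℤ)))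
    (x : Fin n → ℝ) (l : ℝ) : Set (Fin n → ℝ) :=
  ⋃ q ∈ {q ∈ W | (dyCube q.1 q.2 ∩ cloud Ω β x l).Nonempty}, dyCube q.1 q.2

set_option maxHeartbeats 2000000 in
/-- Lemma 2.2: there are `h₁ h₂ ∈ ℕ`, depending only on `β`
(and `n`), such that for every `Q = Q(x,l) ∈ F_β` with `10Q ∉ F_β`, if
`2^{k₀-1} ≤ d(x,Ω^c) < 2^{k₀}` then every `y ∈ N_β(Q)` satisfies
`2^{k₀-h₁-1} ≤ d(y,Ω^c) < 2^{k₀+h₂}`. -/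
theorem cloud_distance_bands {n : ℕ} (Ω : Set (Fin n → ℝ))
    (hΩo : IsOpen Ω) (hΩne : Ω.Nonempty) (hΩpr : Ω ≠ Set.univ)
    (β : ℝ) (hβ0 : 0 < β) (hβ1 : β < 1) :
    ∃ h₁ h₂ : ℕ, ∀ x l, MemF Ω β x l → ¬ MemF Ω β x (10 * l) →
      ∀ k₀ : ℤ, (2:ℝ) ^ (k₀ - 1) ≤ Metric.infDist x Ωᶜ →
        Metric.infDist x Ωᶜ < (2:ℝ) ^ k₀ →
        ∀ y ∈ cloud Ω β x l,
          (2:ℝ) ^ (k₀ - (h₁:ℤ) - 1) ≤ Metric.infDist y Ωᶜ ∧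
          Metric.infDist y Ωᶜ < (2:ℝ) ^ (k₀ + (h₂:ℤ)) := by
  have h1b : (0:ℝ) < 1 - β := by linarith
  obtain ⟨h₁, hh₁⟩ := pow_unbounded_of_one_lt ((1+β)/(1-β)^2) (by norm_num : (1:ℝ) < 2)
  obtain ⟨h₂, hh₂⟩ := pow_unbounded_of_one_lt ((1+β)^2/(1-β)) (by norm_num : (1:ℝ) < 2)
  refine ⟨h₁, h₂, ?_⟩
  intro x l hQ _ k₀ hk₁ hk₂ y hy
  obtain ⟨xΩ, hl0, hl⟩ := hQ
  set D := Metric.infDist x Ωᶜ with hD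
  have hD0 : 0 < D := by
    by_contra h
    push_neg at h
    nlinarith
  simp only [cloud, Set.mem_iUnion] at hy
  obtain ⟨c, r, ⟨cΩ, hr0, hr⟩, ⟨z, hz⟩, hyc⟩ := hy
  set Dc := Metric.infDist c Ωᶜ with hDc
  set Dy := Metric.infDist y Ωᶜ with hDy
  have hDc0 : 0 < Dc := by
    by_contra h
    push_neg at h
    nlinarith
  have hzc : dist z c ≤ r := Metric.mem_closedBall.mp hz.1
  have hzx : dist z x ≤ l := Metric.mem_closedBall.mp hz.2
  have hycr : dist y c ≤ r := Metric.mem_closedBall.mp hyc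
  have hcx : dist c x ≤ r + l := by
    calc dist c x ≤ dist c z + dist z x := dist_triangle c z x
    _ ≤ r + l := by rw [dist_comm c z]; linarith
  have lip1 : Dc ≤ D + dist c x := Metric.infDist_le_infDist_add_dist
  have lip2 : D ≤ Dc + dist x c := Metric.infDist_le_infDist_add_dist
  have lip3 : Dy ≤ Dc + dist y c := Metric.infDist_le_infDist_add_dist
  have lip4 : Dc ≤ Dy + dist c y := Metric.infDist_le_infDist_add_dist
  rw [dist_comm x c] at lip2
  rw [dist_comm c y] at lip4
  -- key inequalities
  have B1 : (1-β) * Dc < (1+β) * D := by nlinarith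
  have B2 : (1-β) * D < (1+β) * Dc := by nlinarith
  have B3 : Dy < (1+β) * Dc := by nlinarith
  have B4 : (1-β) * Dc < Dy := by nlinarith
  have hpow1 : (0:ℝ) < (2:ℝ) ^ (k₀ - 1) := by positivity
  have hpow0 : (0:ℝ) < (2:ℝ) ^ k₀ := by positivity
  have hDy0 : 0 < Dy := by nlinarith
  constructor
  · -- lower bound
    have e1 : (2:ℝ) ^ (k₀ - (h₁:ℤ) - 1) = (2:ℝ) ^ (k₀ - 1) * ((2:ℝ) ^ h₁)⁻¹ := by
      rw [← zpow_natCast (2:ℝ) h₁, ← zpow_neg, ← zpow_add₀ (by norm_num : (2:ℝ) ≠ 0)]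
      ring_nf
    rw [e1]
    have h2p : (0:ℝ) < (2:ℝ) ^ h₁ := by positivity
    have hβp : (0:ℝ) < 1 + β := by linarith
    have key : ((2:ℝ) ^ h₁)⁻¹ * (1+β) < (1-β)^2 := by
      rw [div_lt_iff₀ (by positivity)] at hh₁
      rw [inv_mul_lt_iff₀ h2p]
      linarith
    have c1 : (1-β)^2 * D < (1+β) * Dy := by
      nlinarith [mul_lt_mul_of_pos_left B2 h1b, mul_lt_mul_of_pos_left B4 hβp]
    have c2 : (1-β)^2 * (2:ℝ) ^ (k₀-1) ≤ (1-β)^2 * D :=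
      mul_le_mul_of_nonneg_left hk₁ (sq_nonneg _)
    have c3 : (2:ℝ) ^ (k₀-1) * ((2:ℝ) ^ h₁)⁻¹ * (1+β) < (1+β) * Dy := by
      nlinarith [mul_lt_mul_of_pos_left key hpow1]
    have c4 := (mul_lt_mul_iff_left₀ hβp).mp (by linarith : ((2:ℝ) ^ (k₀-1) * ((2:ℝ) ^ h₁)⁻¹) * (1+β) < Dy * (1+β))
    linarith
  · -- upper bound
    have e2 : (2:ℝ) ^ (k₀ + (h₂:ℤ)) = (2:ℝ) ^ k₀ * (2:ℝ) ^ h₂ := by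
      rw [← zpow_natCast (2:ℝ) h₂, ← zpow_add₀ (by norm_num : (2:ℝ) ≠ 0)]
    rw [e2]
    have key : (1+β)^2 < (1-β) * (2:ℝ) ^ h₂ := by
      rw [div_lt_iff₀ h1b] at hh₂
      linarith
    have c1 : (1-β) * Dy < (1+β)^2 * D := by
      nlinarith [mul_lt_mul_of_pos_left B1 (show (0:ℝ) < 1 + β by linarith),
        mul_lt_mul_of_pos_left B3 h1b]
    have c2 := mul_lt_mul_of_pos_right key hpow0
    have c3 := mul_lt_mul_of_pos_left hk₂ (show (0:ℝ) < (1+β)^2 by positivity)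
    have c4 : (1-β) * Dy < (1-β) * ((2:ℝ) ^ k₀ * (2:ℝ) ^ h₂) := by nlinarith [c1, c2, c3]
    exact (mul_lt_mul_iff_right₀ h1b).mp c4
end
end

section
/- Let Ω be a proper open subset of ℝ^n and 0 < β < 1. For each t ∈ ℕ with 2^{-t} ≤ β/5 there exists a covering W_t of Ω by pairwise disjoint dyadic cubes belonging to F_β such that: (i) if R = R(x_R, l_R) ∈ W_t then 10R ∈ F_β and 2^{-t-3}·d_∞(x_R, Ω^c) ≤ l_R ≤ 2^{-t-1}·d_∞(x_R, Ω^c); and (ii) there is a number M, depending only on β and t (and n), such that for every cube Q₀ ∈ F_β with 10Q₀ ∉ F_β the set W_t(Q₀) = {R ∈ W_t : R ∩ N_β(Q₀) ≠ ∅} has cardinality at most M. -/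
open MeasureTheory Metric Set
open scoped ENNReal

noncomputable section

namespace WtAux

variable {n : ℕ}

lemma two_zpow_pos (k : ℤ) : (0:ℝ) < 2 ^ k := zpow_pos (by norm_num) k

lemma two_zpow_succ (k : ℤ) : (2:ℝ) ^ (k + 1) = 2 * 2 ^ k := by
  rw [zpow_add_one₀ (two_ne_zero)]; ring

lemma mem_dyCube {k : ℤ} {z : Fin n → ℤ} {x : Fin n → ℝ} :
    x ∈ dyCube k z ↔ ∀ i, (z i : ℝ) * 2 ^ (k+1) ≤ x i ∧ x i < ((z i : ℝ) + 1) * 2 ^ (k+1) := by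
  simp [dyCube, Set.mem_pi]

def zOf (k : ℤ) (x : Fin n → ℝ) : Fin n → ℤ := fun i => ⌊x i / 2 ^ (k+1)⌋

lemma mem_dyCube_zOf (k : ℤ) (x : Fin n → ℝ) : x ∈ dyCube k (zOf k x) := by
  rw [mem_dyCube]
  intro i
  have h : (0:ℝ) < 2 ^ (k+1) := two_zpow_pos _
  constructor
  · rw [← le_div_iff₀ h]; exact Int.floor_le _
  · rw [← div_lt_iff₀ h]; exact Int.lt_floor_add_one _

lemma zOf_eq_of_mem {k : ℤ} {z : Fin n → ℤ} {x : Fin n → ℝ} (hx : x ∈ dyCube k z) :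
    z = zOf k x := by
  funext i
  rw [mem_dyCube] at hx
  obtain ⟨h1, h2⟩ := hx i
  have h : (0:ℝ) < 2 ^ (k+1) := two_zpow_pos _
  symm
  rw [zOf]
  rw [Int.floor_eq_iff]
  constructor
  · rw [le_div_iff₀ h]; exact h1
  · rw [div_lt_iff₀ h]; exact h2

lemma dist_center_le {k : ℤ} {z : Fin n → ℤ} {x : Fin n → ℝ} (hx : x ∈ dyCube k z) :
    dist x (dyCenter k z) ≤ 2 ^ k := by
  rw [dist_pi_le_iff (two_zpow_pos k).le]
  intro i
  rw [mem_dyCube] at hx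
  obtain ⟨h1, h2⟩ := hx i
  rw [two_zpow_succ] at h1 h2
  rw [Real.dist_eq, abs_le, dyCenter]
  constructor <;> nlinarith [two_zpow_pos k]

lemma dist_le_of_mem_dyCube {k : ℤ} {z : Fin n → ℤ} {x y : Fin n → ℝ}
    (hx : x ∈ dyCube k z) (hy : y ∈ dyCube k z) : dist x y ≤ 2 * 2 ^ k := by
  calc dist x y ≤ dist x (dyCenter k z) + dist y (dyCenter k z) := dist_triangle_right _ _ _
  _ ≤ 2 ^ k + 2 ^ k := add_le_add (dist_center_le hx) (dist_center_le hy)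
  _ = 2 * 2 ^ k := by ring

lemma dyCube_subset {k k' : ℤ} (hkk : k ≤ k') {z : Fin n → ℤ} {z' : Fin n → ℤ}
    {x : Fin n → ℝ} (hx : x ∈ dyCube k z) (hx' : x ∈ dyCube k' z') :
    dyCube k z ⊆ dyCube k' z' := by
  intro y hy
  rw [mem_dyCube] at hx hx' hy ⊢
  intro i
  obtain ⟨hx1, hx2⟩ := hx i
  obtain ⟨hx'1, hx'2⟩ := hx' i
  obtain ⟨hy1, hy2⟩ := hy i
  have hpos : (0:ℝ) < 2 ^ (k+1) := two_zpow_pos _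
  set N : ℤ := 2 ^ (k' - k).toNat with hN
  have hNh : (N : ℝ) * 2 ^ (k+1) = 2 ^ (k'+1) := by
    rw [hN]
    push_cast
    rw [← zpow_natCast (2:ℝ) (k' - k).toNat, Int.toNat_of_nonneg (by omega),
      ← zpow_add₀ (two_ne_zero : (2:ℝ) ≠ 0)]
    congr 1
    ring
  have k1 : z' i * N ≤ z i := by
    have hr : ((z' i : ℝ) * N) * 2 ^ (k+1) < ((z i : ℝ) + 1) * 2 ^ (k+1) := by
      rw [mul_assoc, hNh]; linarith
    have := (mul_lt_mul_iff_left₀ hpos).mp hr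
    exact_mod_cast Int.lt_add_one_iff.mp (by exact_mod_cast this)
  have k2 : z i + 1 ≤ (z' i + 1) * N := by
    have hr : ((z i : ℝ)) * 2 ^ (k+1) < (((z' i : ℝ) + 1) * N) * 2 ^ (k+1) := by
      rw [mul_assoc, hNh]; linarith
    have := (mul_lt_mul_iff_left₀ hpos).mp hr
    have : z i < (z' i + 1) * N := by exact_mod_cast this
    omega
  constructor
  · have : ((z' i : ℝ) * N) * 2 ^ (k+1) ≤ (z i : ℝ) * 2 ^ (k+1) :=
      mul_le_mul_of_nonneg_right (by exact_mod_cast k1) hpos.le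
    rw [mul_assoc, hNh] at this
    linarith
  · have : ((z i : ℝ) + 1) * 2 ^ (k+1) ≤ (((z' i : ℝ) + 1) * N) * 2 ^ (k+1) := by
      apply mul_le_mul_of_nonneg_right _ hpos.le
      exact_mod_cast k2
    rw [mul_assoc, hNh] at this
    linarith

lemma measurableSet_dyCube (k : ℤ) (z : Fin n → ℤ) : MeasurableSet (dyCube k z) :=
  MeasurableSet.univ_pi fun _ => measurableSet_Ico

lemma volume_dyCube (k : ℤ) (z : Fin n → ℤ) :
    volume (dyCube k z) = (ENNReal.ofReal ((2:ℝ) * 2 ^ k)) ^ n := by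
  rw [dyCube, volume_pi_pi]
  have : ∀ i : Fin n, volume (Ico ((z i : ℝ) * 2 ^ (k+1)) (((z i : ℝ) + 1) * 2 ^ (k+1)))
      = ENNReal.ofReal ((2:ℝ) * 2 ^ k) := by
    intro i
    rw [Real.volume_Ico, two_zpow_succ]
    congr 1
    ring
  simp only [this, Finset.prod_const, Finset.card_univ, Fintype.card_fin]

set_option maxHeartbeats 1000000 in
/-- The counting part of the covering lemma. -/
lemma counting (Ω : Set (Fin n → ℝ)) (β : ℝ) (hβ0 : 0 < β) (hβ1 : β < 1)
    (t : ℕ) (ht : (2:ℝ) ^ (-(t:ℤ)) ≤ β / 5) (W : Set (ℤ × (Fin n → ℤ)))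
    (hW2 : W.PairwiseDisjoint fun q => dyCube q.1 q.2)
    (hW3 : ∀ q ∈ W,
      (2:ℝ) ^ (-(t:ℤ) - 3) * Metric.infDist (dyCenter q.1 q.2) Ωᶜ ≤ (2:ℝ) ^ q.1 ∧
      (2:ℝ) ^ q.1 ≤ (2:ℝ) ^ (-(t:ℤ) - 1) * Metric.infDist (dyCenter q.1 q.2) Ωᶜ) :
    ∃ M : ℕ, ∀ x l, MemF Ω β x l → ¬ MemF Ω β x (10 * l) →
      {q ∈ W | (dyCube q.1 q.2 ∩ cloud Ω β x l).Nonempty}.Finite ∧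
      {q ∈ W | (dyCube q.1 q.2 ∩ cloud Ω β x l).Nonempty}.ncard ≤ M := by
  classical
  set A : ℝ := 5 / (1 - β) with hAdef
  set B : ℝ := (1 - β) ^ 2 / 2 with hBdef
  have h1β : 0 < 1 - β := by linarith
  have hApos : 0 < A := by positivity
  have hA5 : 5 ≤ A := by rw [hAdef, le_div_iff₀ h1β]; nlinarith
  have hBpos : 0 < B := by positivity
  set ratio : ℝ := 2 * (1 + 2 * A) / ((2:ℝ) ^ (-(t:ℤ) - 3) * B) with hratiodef
  refine ⟨⌈ratio ^ n⌉₊, ?_⟩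
  intro x₀ l₀ hQ hQ10
  set S := {q ∈ W | (dyCube q.1 q.2 ∩ cloud Ω β x₀ l₀).Nonempty} with hSdef
  set D₀ : ℝ := Metric.infDist x₀ Ωᶜ with hD0def
  obtain ⟨hx₀, hl₀, hl₀β⟩ := hQ
  rw [← hD0def] at hl₀β
  have hD₀ : 0 < D₀ := by nlinarith
  -- the cloud is contained in a ball and away from the boundary
  have hcloud : ∀ y ∈ cloud Ω β x₀ l₀,
      dist y x₀ ≤ A * D₀ ∧ B * D₀ ≤ Metric.infDist y Ωᶜ := by
    intro y hy
    simp only [cloud, Set.mem_iUnion] at hy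
    obtain ⟨c, r, hmem, hne, hyc⟩ := hy
    obtain ⟨c0, hr, hrβ⟩ := hmem
    obtain ⟨p, hp1, hp2⟩ := hne
    rw [Cube, Metric.mem_closedBall] at hyc hp1 hp2
    set dc : ℝ := Metric.infDist c Ωᶜ with hdc
    set dp : ℝ := Metric.infDist p Ωᶜ with hdp
    set dy : ℝ := Metric.infDist y Ωᶜ with hdy
    have L1 : D₀ ≤ dp + l₀ := by
      calc D₀ ≤ dp + dist x₀ p := Metric.infDist_le_infDist_add_dist
      _ ≤ dp + l₀ := by rw [dist_comm]; linarith
    have L2 : dp ≤ dc + r := by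
      calc dp ≤ dc + dist p c := Metric.infDist_le_infDist_add_dist
      _ ≤ dc + r := by linarith
    have L2' : dc ≤ dp + r := by
      calc dc ≤ dp + dist c p := Metric.infDist_le_infDist_add_dist
      _ ≤ dp + r := by rw [dist_comm]; linarith
    have L3 : dc ≤ dy + r := by
      calc dc ≤ dy + dist c y := Metric.infDist_le_infDist_add_dist
      _ ≤ dy + r := by rw [dist_comm]; linarith
    -- lower bound for dc
    have hdcl : (1 - β) * D₀ < 2 * dc := by nlinarith
    -- lower bound for dy
    have hdyl : B * D₀ ≤ dy := by
      have h6 : (1 - β) * ((1 - β) * D₀) < (1 - β) * (2 * dc) :=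
        mul_lt_mul_of_pos_left hdcl h1β
      have h7 : dy > (1 - β) * dc := by linarith
      rw [hBdef]; nlinarith
    -- upper bound for r
    have hl0D : l₀ < D₀ := by nlinarith
    have L1' : dp ≤ D₀ + l₀ := by
      calc dp ≤ D₀ + dist p x₀ := Metric.infDist_le_infDist_add_dist
      _ ≤ D₀ + l₀ := by linarith
    have hdcu : dc < 2 * D₀ + r := by linarith
    have h8 : β * dc < β * (2 * D₀ + r) := mul_lt_mul_of_pos_left hdcu hβ0
    have hβr : β * r ≤ r := by nlinarith
    have hru : (1 - β) * r ≤ 2 * β * D₀ := by nlinarith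
    refine ⟨?_, hdyl⟩
    -- dist y x₀ ≤ A * D₀
    have htri : dist y x₀ ≤ r + r + l₀ := by
      calc dist y x₀ ≤ dist y c + dist c p + dist p x₀ := dist_triangle4 y c p x₀
      _ ≤ r + r + l₀ := by rw [dist_comm c p]; linarith
    rw [hAdef, div_mul_eq_mul_div, le_div_iff₀ h1β]
    nlinarith
  -- every cube of S is large and contained in a fixed big cube
  set R : ℝ := (1 + 2 * A) * D₀ with hRdef
  set Big : Set (Fin n → ℝ) := Set.univ.pi fun i => Icc (x₀ i - R) (x₀ i + R) with hBigdef
  have hq : ∀ q ∈ S, (2:ℝ) ^ (-(t:ℤ) - 3) * (B * D₀) ≤ 2 * (2:ℝ) ^ q.1 ∧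
      dyCube q.1 q.2 ⊆ Big := by
    rintro q ⟨hqW, y, hy1, hy2⟩
    obtain ⟨hI3, hI4⟩ := hW3 q hqW
    obtain ⟨hyA, hyB⟩ := hcloud y hy2
    set dcq : ℝ := Metric.infDist (dyCenter q.1 q.2) Ωᶜ with hdcq
    set dy : ℝ := Metric.infDist y Ωᶜ with hdy
    have hdyc : dist y (dyCenter q.1 q.2) ≤ 2 ^ q.1 := dist_center_le hy1
    have hkpos : (0:ℝ) < 2 ^ q.1 := two_zpow_pos _
    have Ldy : dy ≤ dcq + 2 ^ q.1 := by
      calc dy ≤ dcq + dist y (dyCenter q.1 q.2) := Metric.infDist_le_infDist_add_dist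
      _ ≤ dcq + 2 ^ q.1 := by linarith
    have Ldy' : dcq ≤ dy + 2 ^ q.1 := by
      calc dcq ≤ dy + dist (dyCenter q.1 q.2) y := Metric.infDist_le_infDist_add_dist
      _ ≤ dy + 2 ^ q.1 := by rw [dist_comm]; linarith
    -- dcq ≤ 2^(t+3) * 2^q.1
    have e1 : (2:ℝ) ^ ((t:ℤ) + 3) * (2:ℝ) ^ (-(t:ℤ) - 3) = 1 := by
      rw [← zpow_add₀ (two_ne_zero : (2:ℝ) ≠ 0)]
      norm_num
    have hdcqu : dcq ≤ (2:ℝ) ^ ((t:ℤ) + 3) * 2 ^ q.1 := by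
      have := mul_le_mul_of_nonneg_left hI3 (two_zpow_pos ((t:ℤ) + 3)).le
      rw [← mul_assoc, e1, one_mul] at this
      exact this
    have ht3 : (1:ℝ) ≤ (2:ℝ) ^ ((t:ℤ) + 3) := by
      rw [show (1:ℝ) = (2:ℝ) ^ (0:ℤ) by norm_num]
      exact zpow_le_zpow_right₀ (by norm_num) (by omega)
    -- lower bound for 2^q.1
    have hlow : (2:ℝ) ^ (-(t:ℤ) - 3) * (B * D₀) ≤ 2 * (2:ℝ) ^ q.1 := by
      have h1 : B * D₀ ≤ (2:ℝ) ^ ((t:ℤ) + 3) * 2 ^ q.1 + 2 ^ q.1 := by linarith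
      have h2 := mul_le_mul_of_nonneg_left h1 (two_zpow_pos (-(t:ℤ) - 3)).le
      have e2 : (2:ℝ) ^ (-(t:ℤ) - 3) * ((2:ℝ) ^ ((t:ℤ) + 3) * 2 ^ q.1 + 2 ^ q.1)
          = 2 ^ q.1 + (2:ℝ) ^ (-(t:ℤ) - 3) * 2 ^ q.1 := by
        rw [mul_add, ← mul_assoc, mul_comm ((2:ℝ) ^ (-(t:ℤ) - 3)) ((2:ℝ) ^ ((t:ℤ) + 3)), e1,
          one_mul]
      rw [e2] at h2
      have e3 : (2:ℝ) ^ (-(t:ℤ) - 3) ≤ 1 := by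
        rw [show (1:ℝ) = (2:ℝ) ^ (0:ℤ) by norm_num]
        exact zpow_le_zpow_right₀ (by norm_num) (by omega)
      nlinarith
    refine ⟨hlow, ?_⟩
    -- upper bound for 2^q.1 : 2^q.1 ≤ (1+A)*D₀/5
    have hdyu : dy ≤ (1 + A) * D₀ := by
      have h0 : dy ≤ D₀ + dist y x₀ := Metric.infDist_le_infDist_add_dist
      linarith
    have ht1 : (2:ℝ) ^ (-(t:ℤ) - 1) ≤ 1 / 2 := by
      rw [show (1:ℝ)/2 = (2:ℝ) ^ (-1:ℤ) by norm_num]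
      exact zpow_le_zpow_right₀ (by norm_num) (by omega)
    have ht0 : (2:ℝ) ^ (-(t:ℤ)) = 2 * (2:ℝ) ^ (-(t:ℤ) - 1) := by
      rw [← two_zpow_succ]
      congr 1
      ring
    have hup : (2:ℝ) ^ q.1 ≤ (1 + A) * D₀ / 5 := by
      have h1 : (2:ℝ) ^ q.1 ≤ (2:ℝ) ^ (-(t:ℤ) - 1) * (dy + 2 ^ q.1) := by
        calc (2:ℝ) ^ q.1 ≤ (2:ℝ) ^ (-(t:ℤ) - 1) * dcq := hI4
        _ ≤ (2:ℝ) ^ (-(t:ℤ) - 1) * (dy + 2 ^ q.1) :=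
          mul_le_mul_of_nonneg_left Ldy' (two_zpow_pos _).le
      have h2 : (2:ℝ) ^ (-(t:ℤ) - 1) * (dy + 2 ^ q.1)
          ≤ (2:ℝ) ^ (-(t:ℤ) - 1) * dy + (1/2) * 2 ^ q.1 := by
        rw [mul_add]
        have : (2:ℝ) ^ (-(t:ℤ) - 1) * 2 ^ q.1 ≤ (1/2) * 2 ^ q.1 :=
          mul_le_mul_of_nonneg_right ht1 hkpos.le
        linarith
      have h3 : (1/2) * (2:ℝ) ^ q.1 ≤ (2:ℝ) ^ (-(t:ℤ) - 1) * dy := by linarith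
      have hdynn : 0 ≤ dy := Metric.infDist_nonneg
      have h4 : (2:ℝ) ^ (-(t:ℤ)) * dy ≤ (β / 5) * dy :=
        mul_le_mul_of_nonneg_right ht hdynn
      have h5 : (β / 5) * dy ≤ (1 / 5) * ((1 + A) * D₀) := by
        have hb5 : β / 5 ≤ 1 / 5 := by linarith
        have : (β / 5) * dy ≤ (1/5) * dy := mul_le_mul_of_nonneg_right hb5 hdynn
        have h2' : (1/5) * dy ≤ (1/5) * ((1 + A) * D₀) := by linarith
        linarith
      rw [ht0] at h4
      rw [div_eq_mul_inv, mul_comm]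
      nlinarith
    intro w hw
    have hdw : dist w x₀ ≤ R := by
      have h1 : dist w y ≤ 2 * 2 ^ q.1 := dist_le_of_mem_dyCube hw hy1
      calc dist w x₀ ≤ dist w y + dist y x₀ := dist_triangle _ _ _
      _ ≤ 2 * 2 ^ q.1 + A * D₀ := by linarith
      _ ≤ R := by rw [hRdef]; nlinarith
    rw [hBigdef, Set.mem_univ_pi]
    intro i
    have := (dist_le_pi_dist w x₀ i).trans hdw
    rw [Real.dist_eq, abs_le] at this
    rw [Set.mem_Icc]
    constructor <;> linarith [this.1, this.2]
  -- the volume estimate: every finite subset of S has few elements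
  have hvolBig : volume Big = ENNReal.ofReal ((2 * R) ^ n) := by
    rw [hBigdef, volume_pi_pi]
    have : ∀ i : Fin n, volume (Icc (x₀ i - R) (x₀ i + R)) = ENNReal.ofReal (2 * R) := by
      intro i
      rw [Real.volume_Icc]
      congr 1
      ring
    rw [Finset.prod_congr rfl fun i _ => this i, Finset.prod_const, Finset.card_univ,
      Fintype.card_fin]
    have hRpos : 0 < R := by rw [hRdef]; positivity
    rw [ENNReal.ofReal_pow (by linarith)]
  set a : ℝ := (2:ℝ) ^ (-(t:ℤ) - 3) * (B * D₀) with hadef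
  have hapos : 0 < a := by
    have := two_zpow_pos (-(t:ℤ) - 3)
    positivity
  have key : ∀ F : Finset (ℤ × (Fin n → ℤ)), ↑F ⊆ S →
      (F.card : ℝ≥0∞) * ENNReal.ofReal (a ^ n) ≤ ENNReal.ofReal ((2 * R) ^ n) := by
    intro F hFS
    have hFW : ↑F ⊆ W := fun q hq' => (hFS hq').1
    have hstep1 : (F.card : ℝ≥0∞) * ENNReal.ofReal (a ^ n)
        = ∑ q ∈ F, ENNReal.ofReal (a ^ n) := by
      rw [Finset.sum_const, nsmul_eq_mul]
    rw [hstep1]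
    have hstep2 : ∑ q ∈ F, ENNReal.ofReal (a ^ n) ≤ ∑ q ∈ F, volume (dyCube q.1 q.2) := by
      apply Finset.sum_le_sum
      intro q hqF
      have h2q := two_zpow_pos q.1
      rw [volume_dyCube, ← ENNReal.ofReal_pow (by positivity)]
      apply ENNReal.ofReal_le_ofReal
      apply pow_le_pow_left₀ hapos.le
      exact (hq q (hFS hqF)).1
    have hstep3 : ∑ q ∈ F, volume (dyCube q.1 q.2) = volume (⋃ q ∈ F, dyCube q.1 q.2) := by
      rw [measure_biUnion_finset (hW2.subset hFW) fun q _ => measurableSet_dyCube q.1 q.2]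
    have hstep4 : volume (⋃ q ∈ F, dyCube q.1 q.2) ≤ volume Big := by
      apply measure_mono
      apply Set.iUnion₂_subset
      intro q hqF
      exact (hq q (hFS hqF)).2
    rw [hvolBig] at hstep4
    calc ∑ q ∈ F, ENNReal.ofReal (a ^ n) ≤ ∑ q ∈ F, volume (dyCube q.1 q.2) := hstep2
    _ = _ := hstep3
    _ ≤ _ := hstep4
  have cardBound : ∀ F : Finset (ℤ × (Fin n → ℤ)), ↑F ⊆ S → F.card ≤ ⌈ratio ^ n⌉₊ := by
    intro F hFS
    have h := key F hFS
    have hratio : (2 * R) ^ n / a ^ n = ratio ^ n := by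
      rw [← div_pow]
      congr 1
      rw [hratiodef, hadef, hRdef]
      field_simp
    have h2 : (F.card : ℝ≥0∞) ≤ ENNReal.ofReal (ratio ^ n) := by
      rw [← hratio, ENNReal.ofReal_div_of_pos (by positivity)]
      rw [ENNReal.le_div_iff_mul_le (Or.inl (by simp [ENNReal.ofReal_pos, hapos, pow_pos]))
        (Or.inl ENNReal.ofReal_ne_top)]
      exact h
    have h3 : ENNReal.ofReal (ratio ^ n) ≤ (⌈ratio ^ n⌉₊ : ℝ≥0∞) := by
      rw [← ENNReal.ofReal_natCast]
      exact ENNReal.ofReal_le_ofReal (Nat.le_ceil _)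
    exact_mod_cast h2.trans h3
  have hfin : S.Finite := by
    by_contra hinf
    obtain ⟨F, hFS, hFcard⟩ :=
      Set.Infinite.exists_subset_card_eq hinf (⌈ratio ^ n⌉₊ + 1)
    have := cardBound F hFS
    omega
  refine ⟨hfin, ?_⟩
  rw [Set.ncard_eq_toFinset_card S hfin]
  exact cardBound hfin.toFinset (by rw [Set.Finite.coe_toFinset])


end WtAux


set_option maxHeartbeats 1000000 in
/-- Lemma 2.3, covering lemma: for each `t ∈ ℕ` with
`2^{-t} ≤ β/5` there is a covering `W_t` of `Ω` by pairwise disjoint dyadic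
cubes `R ∈ F_β` with `10R ∈ F_β`,
`2^{-t-3} d(x_R,Ω^c) ≤ l_R ≤ 2^{-t-1} d(x_R,Ω^c)`, and such that for some `M`
(depending only on `β`, `t` and `n`) at most `M` cubes of `W_t` meet the cloud
of any `Q₀ ∈ F_β` with `10Q₀ ∉ F_β`. -/
theorem exists_dyadic_covering_Wt {n : ℕ} (Ω : Set (Fin n → ℝ))
    (hΩo : IsOpen Ω) (hΩne : Ω.Nonempty) (hΩpr : Ω ≠ Set.univ)
    (β : ℝ) (hβ0 : 0 < β) (hβ1 : β < 1)
    (t : ℕ) (ht : (2:ℝ) ^ (-(t:ℤ)) ≤ β / 5) :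
    ∃ W : Set (ℤ × (Fin n → ℤ)), IsWt Ω β t W := by
  classical
  have hΩc_ne : Ωᶜ.Nonempty := Set.nonempty_compl.2 hΩpr
  have hΩc_cl : IsClosed Ωᶜ := hΩo.isClosed_compl
  set U0 : ℝ := 3 * (2:ℝ) ^ (-(t:ℤ) - 3) with hU0def
  have hp3 : (0:ℝ) < (2:ℝ) ^ (-(t:ℤ) - 3) := WtAux.two_zpow_pos _
  have hpt : (2:ℝ) ^ (-(t:ℤ)) = 8 * (2:ℝ) ^ (-(t:ℤ) - 3) := by
    have h : (2:ℝ) ^ (-(t:ℤ) - 3) * (2:ℝ) ^ (3:ℤ) = (2:ℝ) ^ (-(t:ℤ)) := by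
      rw [← zpow_add₀ (two_ne_zero : (2:ℝ) ≠ 0)]
      congr 1
      ring
    have h8 : (2:ℝ) ^ (3:ℤ) = 8 := by norm_num
    rw [← h, h8]
    ring
  have hU040 : U0 ≤ 3/40 * β := by rw [hU0def]; rw [hpt] at ht; linarith
  have hU0pos : 0 < U0 := by rw [hU0def]; positivity
  have hU0β : U0 < β := by nlinarith
  have hU0third : U0 ≤ 1/3 := by nlinarith
  have hdpos : ∀ x ∈ Ω, 0 < Metric.infDist x Ωᶜ := fun x hx =>
    (hΩc_cl.notMem_iff_infDist_pos hΩc_ne).1 (Set.notMem_compl_iff.mpr hx)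
  have hmem : ∀ y : Fin n → ℝ, 0 < Metric.infDist y Ωᶜ → y ∈ Ω := by
    intro y hy
    by_contra hc
    have : Metric.infDist y Ωᶜ = 0 := Metric.infDist_zero_of_mem hc
    linarith
  -- greatest good scale at each point
  have hsel : ∀ x ∈ Ω, ∃ k : ℤ,
      ((2:ℝ) ^ k ≤ U0 * Metric.infDist (dyCenter k (WtAux.zOf k x)) Ωᶜ) ∧
      ∀ k' : ℤ, ((2:ℝ) ^ k' ≤ U0 * Metric.infDist (dyCenter k' (WtAux.zOf k' x)) Ωᶜ) →
        k' ≤ k := by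
    intro x hx
    have hdx := hdpos x hx
    apply Int.exists_greatest_of_bdd
    · -- bounded above
      obtain ⟨m, hm⟩ := pow_unbounded_of_one_lt (2 * U0 * Metric.infDist x Ωᶜ)
        (one_lt_two (α := ℝ))
      refine ⟨(m : ℤ), fun k hk => ?_⟩
      have hdist : dist x (dyCenter k (WtAux.zOf k x)) ≤ 2 ^ k :=
        WtAux.dist_center_le (WtAux.mem_dyCube_zOf k x)
      have hle : Metric.infDist (dyCenter k (WtAux.zOf k x)) Ωᶜ
          ≤ Metric.infDist x Ωᶜ + 2 ^ k := by
        calc Metric.infDist (dyCenter k (WtAux.zOf k x)) Ωᶜ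
            ≤ Metric.infDist x Ωᶜ + dist (dyCenter k (WtAux.zOf k x)) x :=
          Metric.infDist_le_infDist_add_dist
        _ ≤ _ := by rw [dist_comm]; linarith
      have h2k := WtAux.two_zpow_pos k
      have h1 : U0 * Metric.infDist (dyCenter k (WtAux.zOf k x)) Ωᶜ
          ≤ U0 * (Metric.infDist x Ωᶜ + 2 ^ k) := mul_le_mul_of_nonneg_left hle hU0pos.le
      rw [mul_add] at h1
      have h2 : U0 * 2 ^ k ≤ (1/2) * 2 ^ k :=
        mul_le_mul_of_nonneg_right (by linarith) h2k.le
      have h3 : (2:ℝ) ^ k < 2 ^ (m : ℤ) := by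
        rw [zpow_natCast]
        linarith
      by_contra hc
      push_neg at hc
      have := zpow_le_zpow_right₀ (by norm_num : (1:ℝ) ≤ 2) hc.le
      linarith
    · -- nonempty
      obtain ⟨m, hm⟩ := pow_unbounded_of_one_lt ((U0 * Metric.infDist x Ωᶜ / 2)⁻¹)
        (one_lt_two (α := ℝ))
      refine ⟨-(m : ℤ), ?_⟩
      have hpos2 : (0:ℝ) < U0 * Metric.infDist x Ωᶜ / 2 := by positivity
      have hkm : (2:ℝ) ^ (-(m:ℤ)) ≤ U0 * Metric.infDist x Ωᶜ / 2 := by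
        rw [zpow_neg, zpow_natCast, inv_le_comm₀ (by positivity) hpos2]
        exact hm.le
      have hdist : dist x (dyCenter (-(m:ℤ)) (WtAux.zOf (-(m:ℤ)) x)) ≤ 2 ^ (-(m:ℤ)) :=
        WtAux.dist_center_le (WtAux.mem_dyCube_zOf _ x)
      have hle : Metric.infDist x Ωᶜ
          ≤ Metric.infDist (dyCenter (-(m:ℤ)) (WtAux.zOf (-(m:ℤ)) x)) Ωᶜ + 2 ^ (-(m:ℤ)) := by
        calc Metric.infDist x Ωᶜ
            ≤ Metric.infDist (dyCenter (-(m:ℤ)) (WtAux.zOf (-(m:ℤ)) x)) Ωᶜ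
              + dist x (dyCenter (-(m:ℤ)) (WtAux.zOf (-(m:ℤ)) x)) :=
          Metric.infDist_le_infDist_add_dist
        _ ≤ _ := by linarith
      have h2k := WtAux.two_zpow_pos (-(m:ℤ))
      have h1 : U0 * (Metric.infDist x Ωᶜ - 2 ^ (-(m:ℤ)))
          ≤ U0 * Metric.infDist (dyCenter (-(m:ℤ)) (WtAux.zOf (-(m:ℤ)) x)) Ωᶜ :=
        mul_le_mul_of_nonneg_left (by linarith) hU0pos.le
      rw [mul_sub] at h1
      have h2 : U0 * 2 ^ (-(m:ℤ)) ≤ 1 * 2 ^ (-(m:ℤ)) :=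
        mul_le_mul_of_nonneg_right (by linarith) h2k.le
      rw [one_mul] at h2
      linarith
  choose! kS hP1 hP2 using hsel
  set W : Set (ℤ × (Fin n → ℤ)) := (fun x => (kS x, WtAux.zOf (kS x) x)) '' Ω with hWdef
  -- covering
  have hcov : Ω ⊆ ⋃ q ∈ W, dyCube q.1 q.2 := by
    intro x hx
    exact Set.mem_biUnion (Set.mem_image_of_mem _ hx) (WtAux.mem_dyCube_zOf _ x)
  -- pairwise disjoint
  have hdisj_aux : ∀ x ∈ Ω, ∀ y ∈ Ω, kS x ≤ kS y →
      ((kS x, WtAux.zOf (kS x) x) : ℤ × (Fin n → ℤ)) ≠ (kS y, WtAux.zOf (kS y) y) →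
      Disjoint (dyCube (kS x) (WtAux.zOf (kS x) x)) (dyCube (kS y) (WtAux.zOf (kS y) y)) := by
    intro x hx y hy hk hne
    rw [Set.disjoint_left]
    intro w hw hw'
    rcases eq_or_lt_of_le hk with heq | hlt
    · apply hne
      rw [Prod.mk.injEq]
      refine ⟨heq, ?_⟩
      have e1 : WtAux.zOf (kS x) x = WtAux.zOf (kS x) w := WtAux.zOf_eq_of_mem hw
      have hw'' : w ∈ dyCube (kS x) (WtAux.zOf (kS y) y) := by rw [heq]; exact hw'
      have e2 : WtAux.zOf (kS y) y = WtAux.zOf (kS x) w := WtAux.zOf_eq_of_mem hw''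
      rw [e1, e2]
    · have hsub := WtAux.dyCube_subset hlt.le hw hw'
      have hxmem : x ∈ dyCube (kS y) (WtAux.zOf (kS y) y) :=
        hsub (WtAux.mem_dyCube_zOf _ x)
      have e : WtAux.zOf (kS y) y = WtAux.zOf (kS y) x := WtAux.zOf_eq_of_mem hxmem
      have hPy := hP1 y hy
      have hPx : (2:ℝ) ^ (kS y)
          ≤ U0 * Metric.infDist (dyCenter (kS y) (WtAux.zOf (kS y) x)) Ωᶜ := by
        rw [← e]; exact hPy
      have := hP2 x hx (kS y) hPx
      omega
  have hW2 : W.PairwiseDisjoint fun q => dyCube q.1 q.2 := by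
    rintro q ⟨x, hx, rfl⟩ q' ⟨y, hy, rfl⟩ hne
    rcases le_total (kS x) (kS y) with h | h
    · exact hdisj_aux x hx y hy h hne
    · exact (hdisj_aux y hy x hx h (Ne.symm hne)).symm
  -- the size / membership properties
  have hW3 : ∀ q ∈ W, MemF Ω β (dyCenter q.1 q.2) ((2:ℝ) ^ q.1) ∧
      MemF Ω β (dyCenter q.1 q.2) (10 * (2:ℝ) ^ q.1) ∧
      (2:ℝ) ^ (-(t:ℤ) - 3) * Metric.infDist (dyCenter q.1 q.2) Ωᶜ ≤ (2:ℝ) ^ q.1 ∧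
      (2:ℝ) ^ q.1 ≤ (2:ℝ) ^ (-(t:ℤ) - 1) * Metric.infDist (dyCenter q.1 q.2) Ωᶜ := by
    rintro q ⟨x, hx, rfl⟩
    dsimp only
    set k : ℤ := kS x with hkdef
    set z : Fin n → ℤ := WtAux.zOf k x with hzdef
    set c : Fin n → ℝ := dyCenter k z with hcdef
    set dc : ℝ := Metric.infDist c Ωᶜ with hdcdef
    have h1 : (2:ℝ) ^ k ≤ U0 * dc := hP1 x hx
    have hkpos := WtAux.two_zpow_pos k
    have hdcpos : 0 < dc := by nlinarith
    have hcΩ : c ∈ Ω := hmem c hdcpos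
    -- maximality at scale k+1
    have hnP : ¬ ((2:ℝ) ^ (k+1)
        ≤ U0 * Metric.infDist (dyCenter (k+1) (WtAux.zOf (k+1) x)) Ωᶜ) := by
      intro hp
      have := hP2 x hx (k+1) hp
      omega
    have h2 : U0 * Metric.infDist (dyCenter (k+1) (WtAux.zOf (k+1) x)) Ωᶜ < 2 ^ (k+1) :=
      not_le.mp hnP
    have hdist1 : dist x c ≤ 2 ^ k := WtAux.dist_center_le (WtAux.mem_dyCube_zOf k x)
    have hdist2 : dist x (dyCenter (k+1) (WtAux.zOf (k+1) x)) ≤ 2 ^ (k+1) :=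
      WtAux.dist_center_le (WtAux.mem_dyCube_zOf (k+1) x)
    have e2 : (2:ℝ) ^ (k+1) = 2 * 2 ^ k := WtAux.two_zpow_succ k
    have hlip : dc ≤ Metric.infDist (dyCenter (k+1) (WtAux.zOf (k+1) x)) Ωᶜ + 3 * 2 ^ k := by
      have htri : dist c (dyCenter (k+1) (WtAux.zOf (k+1) x))
          ≤ dist c x + dist x (dyCenter (k+1) (WtAux.zOf (k+1) x)) := dist_triangle _ _ _
      rw [dist_comm c x] at htri
      calc dc ≤ Metric.infDist (dyCenter (k+1) (WtAux.zOf (k+1) x)) Ωᶜ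
            + dist c (dyCenter (k+1) (WtAux.zOf (k+1) x)) :=
        Metric.infDist_le_infDist_add_dist
      _ ≤ _ := by rw [e2] at hdist2; linarith
    have hX1 : U0 * dc
        ≤ U0 * Metric.infDist (dyCenter (k+1) (WtAux.zOf (k+1) x)) Ωᶜ + U0 * (3 * 2 ^ k) := by
      have := mul_le_mul_of_nonneg_left hlip hU0pos.le
      rw [mul_add] at this
      exact this
    have hX2 : U0 * (3 * 2 ^ k) ≤ 2 ^ k := by nlinarith
    have hkey : U0 * dc < 3 * 2 ^ k := by rw [e2] at h2; linarith
    -- now the four statements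
    refine ⟨⟨hcΩ, hkpos, ?_⟩, ⟨hcΩ, by positivity, ?_⟩, ?_, ?_⟩
    · have := mul_lt_mul_of_pos_right hU0β hdcpos
      linarith
    · have h10 : 10 * U0 < β := by linarith
      have := mul_lt_mul_of_pos_right h10 hdcpos
      nlinarith
    · rw [hU0def] at hkey
      linarith
    · have e4 : (2:ℝ) ^ (-(t:ℤ) - 1) = 4 * (2:ℝ) ^ (-(t:ℤ) - 3) := by
        have h : (2:ℝ) ^ (-(t:ℤ) - 3) * (2:ℝ) ^ (2:ℤ) = (2:ℝ) ^ (-(t:ℤ) - 1) := by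
          rw [← zpow_add₀ (two_ne_zero : (2:ℝ) ≠ 0)]
          congr 1
          ring
        have h4 : (2:ℝ) ^ (2:ℤ) = 4 := by norm_num
        rw [← h, h4]
        ring
      have hnn : 0 ≤ (2:ℝ) ^ (-(t:ℤ) - 3) * dc := by positivity
      rw [e4]
      rw [hU0def] at h1
      linarith
  refine ⟨W, hcov, hW2, hW3, ?_⟩
  exact WtAux.counting Ω β hβ0 hβ1 t ht W hW2 fun q hq => ⟨(hW3 q hq).2.2.1, (hW3 q hq).2.2.2⟩
end
end

section
/- Let Ω be a proper open subset of ℝ^n, 0 < β < 1, and let μ be a measure doubling on F_β (i.e., μ(2Q) ≤ c·μ(Q) whenever Q, 2Q ∈ F_β). Let t ∈ ℕ with 2^{-t} ≤ β/20 and let W_t be the dyadic covering of Ω from the covering lemma. Then there exists a constant K, depending only on β and the doubling constant of μ, such that for every cube Q ∈ F_β with 10Q ∉ F_β one has μ(W_{t,Q}) ≤ K·μ(Q), where W_{t,Q} is the union of the cubes R ∈ W_t with R ∩ N_β(Q) ≠ ∅. -/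
open MeasureTheory Metric Set
open scoped ENNReal

noncomputable section

section Helpers

variable {n : ℕ} {Ω : Set (Fin n → ℝ)} {β : ℝ}

lemma cube_subset_cube {a b : Fin n → ℝ} {r₁ r₂ : ℝ} (h : r₁ + dist a b ≤ r₂) :
    Cube a r₁ ⊆ Cube b r₂ := Metric.closedBall_subset_closedBall' h

lemma memF_of_le {x : Fin n → ℝ} {l l' : ℝ}
    (h : MemF Ω β x l) (h0 : 0 < l') (hle : l' ≤ l) : MemF Ω β x l' :=
  ⟨h.1, h0, lt_of_le_of_lt hle h.2.2⟩

lemma mem_of_close {w y : Fin n → ℝ} (h : dist w y < Metric.infDist w Ωᶜ) : y ∈ Ω := by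
  by_contra hy
  have hy' : y ∈ Ωᶜ := hy
  exact absurd (Metric.infDist_le_dist_of_mem hy') (not_le.2 h)

lemma dist_combo {a b w : Fin n → ℝ} {θ ra rb : ℝ} (h0 : 0 ≤ θ) (h1 : θ ≤ 1)
    (ha : dist a w ≤ ra) (hb : dist b w ≤ rb) :
    dist (a + θ • (b - a)) w ≤ (1-θ)*ra + θ*rb := by
  have key : a + θ • (b - a) - w = (1-θ) • (a - w) + θ • (b - w) := by module
  rw [dist_eq_norm, key]
  have hra : 0 ≤ ra := le_trans dist_nonneg ha
  have hrb : 0 ≤ rb := le_trans dist_nonneg hb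
  calc ‖(1-θ) • (a - w) + θ • (b - w)‖ ≤ ‖(1-θ) • (a - w)‖ + ‖θ • (b - w)‖ := norm_add_le _ _
    _ = (1-θ)*‖a-w‖ + θ*‖b-w‖ := by
        rw [norm_smul, norm_smul, Real.norm_eq_abs, Real.norm_eq_abs,
          abs_of_nonneg (by linarith), abs_of_nonneg h0]
    _ ≤ (1-θ)*ra + θ*rb := by
        rw [← dist_eq_norm a w, ← dist_eq_norm b w]
        exact add_le_add (mul_le_mul_of_nonneg_left ha (by linarith))
          (mul_le_mul_of_nonneg_left hb h0)

lemma dyCube_subset (k : ℤ) (z : Fin n → ℤ) :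
    dyCube k z ⊆ Cube (dyCenter k z) ((2:ℝ)^k) := by
  intro y hy
  have h2k : (0:ℝ) < (2:ℝ)^k := by positivity
  have h2 : (2:ℝ)^(k+1) = 2*(2:ℝ)^k := by
    rw [zpow_add₀ (two_ne_zero) k 1, zpow_one]; ring
  simp only [dyCube, Set.mem_pi, Set.mem_univ, forall_true_left, Set.mem_Ico] at hy
  have : dist y (dyCenter k z) ≤ (2:ℝ)^k := by
    rw [dist_pi_le_iff h2k.le]
    intro i
    have h := hy i
    rw [h2] at h
    rw [Real.dist_eq, abs_le]
    simp only [dyCenter]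
    exact ⟨by linarith [h.1], by linarith [h.2]⟩
  exact this

variable {μ : Measure (Fin n → ℝ)} {c' : ℝ≥0∞}

lemma shrink
    (hdb : ∀ x l, MemF Ω β x l → MemF Ω β x (2*l) → μ (Cube x (2*l)) ≤ c' * μ (Cube x l))
    {p : Fin n → ℝ} {v : ℝ} (hv : 0 < v) :
    ∀ j : ℕ, MemF Ω β p (2^j * v) → μ (Cube p (2^j * v)) ≤ c'^j * μ (Cube p v) := by
  intro j
  induction j with
  | zero => intro _; simp
  | succ j ih =>
    intro h
    have hle : (2:ℝ)^j * v ≤ 2^(j+1) * v := by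
      have h2 : (2:ℝ)^j ≤ 2^(j+1) := pow_le_pow_right₀ (by norm_num : (1:ℝ) ≤ 2) (Nat.le_succ j)
      exact mul_le_mul_of_nonneg_right h2 hv.le
    have h2 : MemF Ω β p (2^j * v) := memF_of_le h (by positivity) hle
    have heq : (2:ℝ)^(j+1) * v = 2*(2^j*v) := by ring
    have hstep := hdb p (2^j*v) h2 (by rw [← heq]; exact h)
    calc μ (Cube p (2^(j+1)*v)) = μ (Cube p (2*(2^j*v))) := by rw [heq]
      _ ≤ c' * μ (Cube p (2^j*v)) := hstep
      _ ≤ c' * (c'^j * μ (Cube p v)) := mul_le_mul_right (ih h2) _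
      _ = c'^(j+1) * μ (Cube p v) := by rw [pow_succ]; ring

lemma slide (hc1 : 1 ≤ c')
    (hdb : ∀ x l, MemF Ω β x l → MemF Ω β x (2*l) → μ (Cube x (2*l)) ≤ c' * μ (Cube x l))
    {v : ℝ} (hv : 0 < v) :
    ∀ m : ℕ, ∀ a b : Fin n → ℝ, dist a b ≤ m * v →
      (∀ θ : ℝ, 0 ≤ θ → θ ≤ 1 → MemF Ω β (a + θ • (b - a)) (2*v)) →
      μ (Cube a v) ≤ c'^m * μ (Cube b v) := by
  intro m
  induction m with
  | zero =>
    intro a b hd _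
    have hab : a = b := dist_eq_zero.mp (le_antisymm (by simpa using hd) dist_nonneg)
    simp [hab]
  | succ m ih =>
    intro a b hd hseg
    by_cases hle : dist a b ≤ v
    · have hb2 : MemF Ω β b (2*v) := by
        have := hseg 1 zero_le_one le_rfl
        simpa using this
      have hb1 : MemF Ω β b v := memF_of_le hb2 hv (by linarith)
      calc μ (Cube a v) ≤ μ (Cube b (2*v)) := measure_mono (cube_subset_cube (by linarith))
        _ ≤ c' * μ (Cube b v) := hdb b v hb1 hb2
        _ ≤ c'^(m+1) * μ (Cube b v) :=
            mul_le_mul_left (le_self_pow₀ hc1 (Nat.succ_ne_zero m)) _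
    · push_neg at hle
      have hdpos : 0 < dist a b := lt_trans hv hle
      set θ₀ := v / dist a b with hθ₀def
      have hθ0 : 0 < θ₀ := div_pos hv hdpos
      have hθ1 : θ₀ ≤ 1 := (div_le_one hdpos).2 hle.le
      set a' := a + θ₀ • (b - a) with ha'def
      have hnorm_ba : ‖b - a‖ = dist a b := by rw [← dist_eq_norm, dist_comm]
      have hdaa' : dist a a' = v := by
        have h1 : a - a' = -(θ₀ • (b - a)) := by rw [ha'def]; module
        rw [dist_eq_norm, h1, norm_neg, norm_smul, Real.norm_eq_abs, abs_of_pos hθ0,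
          hnorm_ba, hθ₀def, div_mul_cancel₀ _ hdpos.ne']
      have hda'b : dist a' b ≤ m * v := by
        have h1 : a' - b = -((1-θ₀) • (b - a)) := by rw [ha'def]; module
        have : dist a' b = (1-θ₀) * dist a b := by
          rw [dist_eq_norm, h1, norm_neg, norm_smul, Real.norm_eq_abs,
            abs_of_nonneg (by linarith), hnorm_ba]
        rw [this]
        have : (1-θ₀) * dist a b = dist a b - v := by
          rw [hθ₀def]; field_simp
        rw [this]
        push_cast at hd ⊢
        linarith
      have hseg' : ∀ θ : ℝ, 0 ≤ θ → θ ≤ 1 → MemF Ω β (a' + θ • (b - a')) (2*v) := by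
        intro θ h0 h1
        have heq : a' + θ • (b - a') = a + (θ₀ + θ*(1-θ₀)) • (b - a) := by
          rw [ha'def]; module
        rw [heq]
        have hm1 : 0 ≤ θ*(1-θ₀) := mul_nonneg h0 (by linarith)
        have hm2 : 0 ≤ (1-θ)*(1-θ₀) := mul_nonneg (by linarith) (by linarith)
        refine hseg _ (by linarith only [hm1, hθ0]) (by linarith only [hm2])
      have ha'2 : MemF Ω β a' (2*v) := by
        have := hseg θ₀ hθ0.le hθ1
        rwa [← ha'def] at this
      have ha'1 : MemF Ω β a' v := memF_of_le ha'2 hv (by linarith)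
      calc μ (Cube a v) ≤ μ (Cube a' (2*v)) := measure_mono (cube_subset_cube (by rw [hdaa']; linarith))
        _ ≤ c' * μ (Cube a' v) := hdb a' v ha'1 ha'2
        _ ≤ c' * (c'^m * μ (Cube b v)) := mul_le_mul_right (ih a' b hda'b hseg') _
        _ = c'^(m+1) * μ (Cube b v) := by rw [pow_succ]; ring

set_option maxHeartbeats 2000000 in
lemma key (hβ0 : 0 < β) (hβ1 : β < 1) (hc1 : 1 ≤ c')
    (hdb : ∀ x l, MemF Ω β x l → MemF Ω β x (2*l) → μ (Cube x (2*l)) ≤ c' * μ (Cube x l))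
    {τ : ℝ} (hτ0 : 0 < τ) (hτβ : τ ≤ β/20)
    {x : Fin n → ℝ} {l : ℝ} (hQ : MemF Ω β x l) (hQ10 : ¬ MemF Ω β x (10*l))
    {xR : Fin n → ℝ} {lR : ℝ} (hR : MemF Ω β xR lR)
    (hlow : τ * Metric.infDist xR Ωᶜ ≤ 8 * lR)
    (hhigh : lR ≤ (τ/2) * Metric.infDist xR Ωᶜ)
    (hmeet : (Cube xR lR ∩ cloud Ω β x l).Nonempty) :
    μ (Cube xR lR) ≤
      c'^(⌈(64:ℝ)/(β*(1-β)^3)⌉₊ + 2*⌈(704:ℝ)/(τ*β*(1-β)^3)⌉₊) * μ (Cube x l) := by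
  obtain ⟨p, hpR, hpC⟩ := hmeet
  simp only [cloud, Set.mem_iUnion] at hpC
  obtain ⟨xc, r, hS, hne, hpS⟩ := hpC
  obtain ⟨q', hq'S, hq'Q⟩ := hne
  have hδ0 : (0:ℝ) < 1 - β := by linarith
  have hl0 : 0 < l := hQ.2.1
  have hr0 : 0 < r := hS.2.1
  have hlR0 : 0 < lR := hR.2.1
  have hτ1 : τ ≤ 1 := by linarith
  -- distances
  have hpxR : dist p xR ≤ lR := Metric.mem_closedBall.mp hpR
  have hpxc : dist p xc ≤ r := Metric.mem_closedBall.mp hpS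
  have hqxc : dist q' xc ≤ r := Metric.mem_closedBall.mp hq'S
  have hqx : dist q' x ≤ l := Metric.mem_closedBall.mp hq'Q
  -- Lipschitz facts for infDist
  have lip : ∀ (u w : Fin n → ℝ), Metric.infDist u Ωᶜ ≤ Metric.infDist w Ωᶜ + dist u w :=
    fun u w => Metric.infDist_le_infDist_add_dist
  -- facts phrased with literal infDist, before generalizing
  have hlβd : l < β * Metric.infDist x Ωᶜ := hQ.2.2
  have h10 : β * Metric.infDist x Ωᶜ ≤ 10 * l := by
    by_contra h
    push_neg at h
    exact hQ10 ⟨hQ.1, by linarith, by linarith⟩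
  have hrβ : r < β * Metric.infDist xc Ωᶜ := hS.2.2
  have hd0 : (0:ℝ) ≤ Metric.infDist x Ωᶜ := Metric.infDist_nonneg
  have hdc0 : (0:ℝ) ≤ Metric.infDist xc Ωᶜ := Metric.infDist_nonneg
  have hdR0 : (0:ℝ) ≤ Metric.infDist xR Ωᶜ := Metric.infDist_nonneg
  have hdq0 : (0:ℝ) ≤ Metric.infDist q' Ωᶜ := Metric.infDist_nonneg
  have hdp0 : (0:ℝ) ≤ Metric.infDist p Ωᶜ := Metric.infDist_nonneg
  have L1 : Metric.infDist x Ωᶜ ≤ Metric.infDist q' Ωᶜ + l :=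
    le_trans (lip x q') (by rw [dist_comm]; linarith)
  have L1' : Metric.infDist q' Ωᶜ ≤ Metric.infDist x Ωᶜ + l :=
    le_trans (lip q' x) (by linarith)
  have L2 : Metric.infDist q' Ωᶜ ≤ Metric.infDist xc Ωᶜ + r :=
    le_trans (lip q' xc) (by linarith)
  have L3 : Metric.infDist xc Ωᶜ ≤ Metric.infDist q' Ωᶜ + r :=
    le_trans (lip xc q') (by rw [dist_comm]; linarith)
  have L4 : Metric.infDist p Ωᶜ ≤ Metric.infDist xc Ωᶜ + r :=
    le_trans (lip p xc) (by linarith)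
  have L5 : Metric.infDist xR Ωᶜ ≤ Metric.infDist p Ωᶜ + lR :=
    le_trans (lip xR p) (by rw [dist_comm]; linarith)
  have L6 : Metric.infDist xc Ωᶜ ≤ Metric.infDist p Ωᶜ + r :=
    le_trans (lip xc p) (by rw [dist_comm]; linarith)
  have L5' : Metric.infDist p Ωᶜ ≤ Metric.infDist xR Ωᶜ + lR :=
    le_trans (lip p xR) (by linarith)
  -- now generalize the distances to the boundary
  set d := Metric.infDist x Ωᶜ with hd_def
  set dc := Metric.infDist xc Ωᶜ with hdc_def
  set dR := Metric.infDist xR Ωᶜ with hdR_def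
  set dq := Metric.infDist q' Ωᶜ with hdq_def
  set dp := Metric.infDist p Ωᶜ with hdp_def
  clear_value d dc dR dq dp
  -- one-sided products
  have hβdc : β * dc ≤ dc := mul_le_of_le_one_left hdc0 hβ1.le
  have hβd : β * d ≤ d := mul_le_of_le_one_left hd0 hβ1.le
  have hβdR : β * dR ≤ dR := mul_le_of_le_one_left hdR0 hβ1.le
  have hβl : β * l ≤ l := mul_le_of_le_one_left hl0.le hβ1.le
  have hβr : β * r ≤ r := mul_le_of_le_one_left hr0.le hβ1.le
  have hβlR : β * lR ≤ lR := mul_le_of_le_one_left hlR0.le hβ1.le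
  have hlδ : l * (1-β) ≤ l := mul_le_of_le_one_right hl0.le (by linarith)
  -- scale facts for R
  have h40 : 40 * lR ≤ β * dR := by
    have hint : τ*dR ≤ (β/20)*dR := mul_le_mul_of_nonneg_right hτβ hdR0
    linarith only [hhigh, hint]
  -- A1 : l*(1-β) ≤ 2*(β*dc)
  have hsum : d ≤ 2*dc + l := by linarith only [L1, L2, hrβ, hβdc]
  have A1 : l * (1-β) ≤ 2 * (β * dc) := by
    have h1 : β * d ≤ β * (2*dc + l) := mul_le_mul_of_nonneg_left hsum hβ0.le
    linarith only [h1, hlβd]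
  have hbdc : β * dc ≤ β*d + β*l + β*r := by
    have h0 : dc ≤ d + l + r := by linarith only [L3, L1']
    have h1 := mul_le_mul_of_nonneg_left h0 hβ0.le
    linarith only [h1]
  -- A2 : r*(1-β) < 11*l
  have A2 : r * (1-β) < 11 * l := by linarith only [hrβ, hbdc, h10, hβl]
  -- A3 : lR*(1-β) ≤ l
  have A3 : lR * (1-β) ≤ l := by
    have e0 : dR ≤ dc + r + lR := by linarith only [L5, L4]
    have e1 : β * dR ≤ β * (dc + r + lR) := mul_le_mul_of_nonneg_left e0 hβ0.le
    have e2 : 40*lR ≤ 11*l + 2*(β*r) + β*lR := by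
      linarith only [h40, e1, hbdc, h10, hβl]
    have e3 := mul_le_mul_of_nonneg_right e2 hδ0.le
    have e4 := mul_le_mul_of_nonneg_right hβr hδ0.le
    have e5 := mul_le_mul_of_nonneg_right hβlR hδ0.le
    linarith only [e3, e4, e5, A2, hlδ, hl0]
  -- A4 : 39*lR ≤ β*dp
  have A4 : 39 * lR ≤ β * dp := by
    have e1 : β * dR ≤ β * (dp + lR) := mul_le_mul_of_nonneg_left L5 hβ0.le
    linarith only [h40, e1, hβlR]
  -- A5 : τ*(1-β)^2*l ≤ 18*(β*lR)
  have A5 : τ*(1-β)^2*l ≤ 18*(β*lR) := by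
    have e1 : (1-β)*dc ≤ dp := by linarith only [L6, hrβ, hβdc]
    have ea : τ*((1-β)*dc) ≤ τ*(dR + lR) :=
      mul_le_mul_of_nonneg_left (by linarith only [e1, L5']) hτ0.le
    have eb : τ * lR ≤ lR := mul_le_of_le_one_left hlR0.le hτ1
    have e2 : τ*((1-β)*dc) ≤ 9*lR := by linarith only [ea, eb, hlow]
    have ec := mul_le_mul_of_nonneg_left A1 (mul_nonneg hτ0.le hδ0.le)
    have ed := mul_le_mul_of_nonneg_left e2 (by positivity : (0:ℝ) ≤ 2*β)
    linarith only [ec, ed]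
  -- membership of p
  have hpΩ : p ∈ Ω := by
    apply mem_of_close (w := xR)
    rw [← hdR_def, dist_comm]
    calc dist p xR ≤ lR := hpxR
      _ < dR := by linarith only [h40, hβdR, hlR0]
  -- scales
  set s := β*(1-β)^2*l/16 with hs_def
  have hs0 : 0 < s := by rw [hs_def]; positivity
  set v := min s (2*lR) with hv_def
  have hv0 : 0 < v := lt_min hs0 (by linarith only [hlR0])
  have hvs : v ≤ s := min_le_left _ _
  have hv2lR : v ≤ 2*lR := min_le_right _ _
  have hX : (0:ℝ) ≤ β*(1-β)^2*l := by positivity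
  have hY : (0:ℝ) ≤ τ*(1-β)^2*l := by positivity
  have hv₀ : τ*β*(1-β)^2*l/32 ≤ v := by
    apply le_min
    · rw [hs_def]
      have hXt : τ*(β*(1-β)^2*l) ≤ β*(1-β)^2*l := mul_le_of_le_one_left hX hτ1
      linarith only [hXt, hX]
    · have hYb : β*(τ*(1-β)^2*l) ≤ τ*(1-β)^2*l := mul_le_of_le_one_left hY hβ1.le
      linarith only [hYb, A5, hβlR, hlR0]
  -- the shrink exponent
  have hex : ∃ j:ℕ, 2*lR ≤ 2^j * v := by
    obtain ⟨k, hk⟩ := pow_unbounded_of_one_lt ((2*lR)/v) (by norm_num : (1:ℝ) < 2)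
    exact ⟨k, by rw [div_lt_iff₀ hv0] at hk; linarith only [hk]⟩
  set j := Nat.find hex with hj_def
  have hj : 2*lR ≤ 2^j * v := Nat.find_spec hex
  have hjv4 : (2:ℝ)^j * v ≤ 4*lR := by
    rcases Nat.eq_zero_or_pos j with h0 | hpos
    · rw [h0, pow_zero]
      linarith only [hv2lR, hlR0]
    · obtain ⟨i, hi⟩ := Nat.exists_eq_succ_of_ne_zero hpos.ne'
      have hmin : ¬ (2*lR ≤ 2^i * v) :=
        Nat.find_min hex (m := i) (by rw [← hj_def]; omega)
      push_neg at hmin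
      have heq : (2:ℝ)^(i+1) * v = 2*(2^i*v) := by ring
      rw [hi, heq]
      linarith only [hmin]
  have hjle : (2:ℝ)^j ≤ 64/(β*(1-β)^3) := by
    have hpos3 : (0:ℝ) < β*(1-β)^3 := by positivity
    rcases Nat.eq_zero_or_pos j with h0 | hpos
    · rw [h0, pow_zero, le_div_iff₀ hpos3]
      have h3 : (1-β)^3 ≤ 1 := pow_le_one₀ hδ0.le (by linarith)
      have h4 : β*(1-β)^3 ≤ β := mul_le_of_le_one_right hβ0.le h3
      linarith only [h4, hβ1]
    · obtain ⟨i, hi⟩ := Nat.exists_eq_succ_of_ne_zero hpos.ne'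
      have hmin : ¬ (2*lR ≤ 2^i * v) :=
        Nat.find_min hex (m := i) (by rw [← hj_def]; omega)
      push_neg at hmin
      rcases le_total s (2*lR) with hc1' | hc1'
      · have hveq : v = s := min_eq_left hc1'
        rw [hveq, hs_def] at hmin
        have e1 : (2:ℝ)^i * (β*(1-β)^2*l/16) * (1-β) < 2*lR*(1-β) :=
          mul_lt_mul_of_pos_right hmin hδ0
        have hA3' : 2*lR*(1-β) ≤ 2*l := by linarith only [A3]
        have e2 : (2:ℝ)^i * (β*(1-β)^3) * l < 32 * l := by
          have expand : (2:ℝ)^i * (β*(1-β)^2*l/16) * (1-β)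
              = ((2:ℝ)^i * (β*(1-β)^3) * l)/16 := by ring
          rw [expand] at e1
          linarith only [e1, hA3']
        have e3 : (2:ℝ)^i * (β*(1-β)^3) < 32 := by
          have := lt_of_mul_lt_mul_right e2 hl0.le
          linarith only [this]
        rw [hi, le_div_iff₀ hpos3, pow_succ]
        linarith only [e3]
      · have hveq : v = 2*lR := min_eq_right hc1'
        rw [hveq] at hmin
        have h1 : (1:ℝ) ≤ 2^i := one_le_pow₀ (by norm_num)
        have h2 : 1*(2*lR) ≤ (2:ℝ)^i*(2*lR) :=
          mul_le_mul_of_nonneg_right h1 (by linarith only [hlR0])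
        linarith only [h2, hmin]
  set J := ⌈(64:ℝ)/(β*(1-β)^3)⌉₊ with hJ_def
  have hjJ : j ≤ J := by
    have hJ1 : (64:ℝ)/(β*(1-β)^3) ≤ J := Nat.le_ceil _
    have hJ2 : (J:ℝ) ≤ 2^J := by exact_mod_cast (Nat.lt_two_pow_self (n := J)).le
    have h2j : (2:ℝ)^j ≤ 2^J := le_trans hjle (le_trans hJ1 hJ2)
    exact (pow_le_pow_iff_right₀ (by norm_num : (1:ℝ) < 2)).mp h2j
  set M₁ := ⌈(704:ℝ)/(τ*β*(1-β)^3)⌉₊ with hM₁_def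
  have hM₁c : (704:ℝ)/(τ*β*(1-β)^3) ≤ M₁ := Nat.le_ceil _
  have hposτ3 : (0:ℝ) < τ*β*(1-β)^3 := by positivity
  have hM₁l : 704 ≤ (M₁:ℝ)*(τ*β*(1-β)^3) := by
    rw [div_le_iff₀ hposτ3] at hM₁c
    linarith only [hM₁c]
  have hM₁v : 22*l ≤ (M₁:ℝ)*v*(1-β) := by
    have e1 : (M₁:ℝ)*(τ*β*(1-β)^2*l/32)*(1-β) ≤ (M₁:ℝ)*v*(1-β) :=
      mul_le_mul_of_nonneg_right
        (mul_le_mul_of_nonneg_left hv₀ (Nat.cast_nonneg _)) hδ0.le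
    have e2 : 704*(l/32) ≤ ((M₁:ℝ)*(τ*β*(1-β)^3))*(l/32) :=
      mul_le_mul_of_nonneg_right hM₁l (by positivity)
    linarith only [e1, e2]
  -- step counts
  have hslide1 : dist p q' ≤ (M₁:ℝ) * v := by
    have h1 : dist p q' ≤ 2*r := by
      have h := dist_triangle p xc q'
      rw [dist_comm xc q'] at h
      linarith only [h, hpxc, hqxc]
    have h2 : 2*r*(1-β) < 22*l := by linarith only [A2]
    have h3 : dist p q' * (1-β) ≤ (M₁:ℝ)*v*(1-β) := by
      have e := mul_le_mul_of_nonneg_right h1 hδ0.le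
      linarith only [e, h2, hM₁v]
    exact le_of_mul_le_mul_right (by linarith only [h3]) hδ0
  have hslide2 : dist q' x ≤ (M₁:ℝ) * v := by
    have h3 : dist q' x * (1-β) ≤ (M₁:ℝ)*v*(1-β) := by
      have e := mul_le_mul_of_nonneg_right hqx hδ0.le
      linarith only [e, hlδ, hM₁v, hl0]
    exact le_of_mul_le_mul_right (by linarith only [h3]) hδ0
  -- MemF p (2^j * v)
  have hmemp : MemF Ω β p (2^j * v) := by
    refine ⟨hpΩ, by positivity, ?_⟩
    rw [← hdp_def]
    calc (2:ℝ)^j * v ≤ 4*lR := hjv4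
      _ < β * dp := by linarith only [A4, hlR0]
  -- segment hypotheses
  have hseg1 : ∀ θ : ℝ, 0 ≤ θ → θ ≤ 1 → MemF Ω β (p + θ • (q' - p)) (2*v) := by
    intro θ h0 h1
    have hyc : dist (p + θ • (q' - p)) xc ≤ r := by
      have h := dist_combo h0 h1 hpxc hqxc
      calc dist (p + θ • (q' - p)) xc ≤ (1-θ)*r + θ*r := h
        _ = r := by ring
    have hyΩ : (p + θ • (q' - p)) ∈ Ω := by
      apply mem_of_close (w := xc)
      rw [← hdc_def, dist_comm]
      calc dist (p + θ • (q' - p)) xc ≤ r := hyc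
        _ < dc := by linarith only [hrβ, hβdc]
    have hl' := lip xc (p + θ • (q' - p))
    rw [← hdc_def, dist_comm] at hl'
    have hdy : dc - r ≤ Metric.infDist (p + θ • (q' - p)) Ωᶜ := by
      linarith only [hl', hyc]
    refine ⟨hyΩ, by positivity, ?_⟩
    have e1 : β*(dc - r) ≤ β * Metric.infDist (p + θ • (q' - p)) Ωᶜ :=
      mul_le_mul_of_nonneg_left hdy hβ0.le
    have e2 : β*r < β*(β*dc) := mul_lt_mul_of_pos_left hrβ hβ0
    have e3 := mul_le_mul_of_nonneg_left A1 (show (0:ℝ) ≤ (1-β)/2 by linarith)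
    have e4 : β*((1-β)^2*l) ≤ (1-β)^2*l :=
      mul_le_of_le_one_left (by positivity) hβ1.le
    have e5 : (0:ℝ) < (1-β)^2*l := by positivity
    linarith only [e1, e2, e3, e4, e5, hvs, hs_def]
  have hseg2 : ∀ θ : ℝ, 0 ≤ θ → θ ≤ 1 → MemF Ω β (q' + θ • (x - q')) (2*v) := by
    intro θ h0 h1
    have hyx : dist (q' + θ • (x - q')) x ≤ l := by
      have h := dist_combo h0 h1 hqx (by simp : dist x x ≤ (0:ℝ))
      have h2 : (1-θ)*l ≤ l :=
        mul_le_of_le_one_left hl0.le (by linarith only [h0])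
      calc dist (q' + θ • (x - q')) x ≤ (1-θ)*l + θ*0 := h
        _ ≤ l := by linarith only [h2]
    have hyΩ : (q' + θ • (x - q')) ∈ Ω := by
      apply mem_of_close (w := x)
      rw [← hd_def, dist_comm]
      calc dist (q' + θ • (x - q')) x ≤ l := hyx
        _ < d := by linarith only [hlβd, hβd]
    have hl' := lip x (q' + θ • (x - q'))
    rw [← hd_def, dist_comm] at hl'
    have hdy : d - l ≤ Metric.infDist (q' + θ • (x - q')) Ωᶜ := by
      linarith only [hl', hyx]
    refine ⟨hyΩ, by positivity, ?_⟩
    have e1 : β*(d - l) ≤ β * Metric.infDist (q' + θ • (x - q')) Ωᶜ :=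
      mul_le_mul_of_nonneg_left hdy hβ0.le
    have e4 : β*((1-β)^2*l) ≤ (1-β)^2*l :=
      mul_le_of_le_one_left (by positivity) hβ1.le
    have e5 : (1-β)^2*l ≤ (1-β)*l := by
      have h6 := mul_nonneg (mul_nonneg hδ0.le hβ0.le) hl0.le
      linarith only [h6]
    have e6 : (0:ℝ) < (1-β)*l := by positivity
    linarith only [e1, e4, e5, e6, hvs, hs_def, hlβd]
  -- the chain
  have step1 : μ (Cube xR lR) ≤ μ (Cube p (2^j * v)) := by
    apply measure_mono
    apply cube_subset_cube
    rw [dist_comm] at hpxR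
    linarith only [hpxR, hj]
  have step2 : μ (Cube p (2^j * v)) ≤ c'^j * μ (Cube p v) := shrink hdb hv0 j hmemp
  have step3 : μ (Cube p v) ≤ c'^M₁ * μ (Cube q' v) :=
    slide hc1 hdb hv0 M₁ p q' hslide1 hseg1
  have step4 : μ (Cube q' v) ≤ c'^M₁ * μ (Cube x v) :=
    slide hc1 hdb hv0 M₁ q' x hslide2 hseg2
  have step5 : μ (Cube x v) ≤ μ (Cube x l) := by
    apply measure_mono
    apply cube_subset_cube
    rw [dist_self]
    have e4 : β*((1-β)^2*l) ≤ (1-β)^2*l :=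
      mul_le_of_le_one_left (by positivity) hβ1.le
    have e7 : (1-β)^2*l ≤ l :=
      mul_le_of_le_one_left hl0.le (pow_le_one₀ hδ0.le (by linarith))
    linarith only [hvs, hs_def, e4, e7, hl0]
  calc μ (Cube xR lR) ≤ c'^j * μ (Cube p v) := le_trans step1 step2
    _ ≤ c'^j * (c'^M₁ * μ (Cube q' v)) := mul_le_mul_right step3 _
    _ ≤ c'^j * (c'^M₁ * (c'^M₁ * μ (Cube x v))) := by
        exact mul_le_mul_right (mul_le_mul_right step4 _) _
    _ ≤ c'^j * (c'^M₁ * (c'^M₁ * μ (Cube x l))) := by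
        exact mul_le_mul_right (mul_le_mul_right (mul_le_mul_right step5 _) _) _
    _ = c'^(j + 2*M₁) * μ (Cube x l) := by
        rw [pow_add, pow_mul]
        ring_nf
    _ ≤ c'^(J + 2*M₁) * μ (Cube x l) := by
        apply mul_le_mul_left
        exact pow_le_pow_right₀ hc1 (by omega)

end Helpers

/-- Lemma 2.4: if `μ` is doubling on `F_β` with doubling
constant `c`, `2^{-t} ≤ β/20` and `W_t` is a covering as in the covering
lemma, then there is `K`, depending only on `β` and `c`, such that
`μ(W_{t,Q}) ≤ K μ(Q)` for every `Q ∈ F_β` with `10Q ∉ F_β`. -/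
theorem measure_WtQ_le {n : ℕ} (Ω : Set (Fin n → ℝ))
    (hΩo : IsOpen Ω) (hΩne : Ω.Nonempty) (hΩpr : Ω ≠ Set.univ)
    (β : ℝ) (hβ0 : 0 < β) (hβ1 : β < 1)
    (μ : Measure (Fin n → ℝ)) (c : ℝ≥0∞) (hc : c ≠ ⊤)
    (hdb : ∀ x l, MemF Ω β x l → MemF Ω β x (2 * l) →
      μ (Cube x (2 * l)) ≤ c * μ (Cube x l))
    (t : ℕ) (ht : (2:ℝ) ^ (-(t:ℤ)) ≤ β / 20)
    (W : Set (ℤ × (Fin n → ℤ))) (hW : IsWt Ω β t W) :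
    ∃ K : ℝ≥0∞, K ≠ ⊤ ∧ ∀ x l, MemF Ω β x l → ¬ MemF Ω β x (10 * l) →
      μ (WtQ Ω β W x l) ≤ K * μ (Cube x l) := by
  obtain ⟨hcov, hdisj, hprops, M, hM⟩ := hW
  set c' := max c 1 with hc'_def
  have hc1 : 1 ≤ c' := le_max_right _ _
  have hc'top : c' ≠ ⊤ := (max_lt hc.lt_top ENNReal.one_lt_top).ne
  have hdb' : ∀ x l, MemF Ω β x l → MemF Ω β x (2*l) →
      μ (Cube x (2*l)) ≤ c' * μ (Cube x l) :=
    fun x l h1 h2 => (hdb x l h1 h2).trans (mul_le_mul_left (le_max_left _ _) _)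
  set τ := (2:ℝ)^(-(t:ℤ)) with hτ_def
  have hτ0 : 0 < τ := by rw [hτ_def]; positivity
  set N := ⌈(64:ℝ)/(β*(1-β)^3)⌉₊ + 2*⌈(704:ℝ)/(τ*β*(1-β)^3)⌉₊ with hN_def
  refine ⟨(M:ℝ≥0∞) * c'^N, ENNReal.mul_ne_top (ENNReal.natCast_ne_top M)
    (ENNReal.pow_ne_top hc'top), ?_⟩
  intro x l hQ hQ10
  obtain ⟨hfin, hcard⟩ := hM x l hQ hQ10
  have hτ8 : (2:ℝ)^(-(t:ℤ)-3) = τ/8 := by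
    rw [hτ_def, show (-(t:ℤ)-3) = (-(t:ℤ)) + (-3) by ring,
      zpow_add₀ (two_ne_zero : (2:ℝ) ≠ 0)]
    norm_num
    ring
  have hτ2 : (2:ℝ)^(-(t:ℤ)-1) = τ/2 := by
    rw [hτ_def, show (-(t:ℤ)-1) = (-(t:ℤ)) + (-1) by ring,
      zpow_add₀ (two_ne_zero : (2:ℝ) ≠ 0)]
    norm_num
    ring
  have perCube : ∀ q ∈ hfin.toFinset, μ (dyCube q.1 q.2) ≤ c'^N * μ (Cube x l) := by
    intro q hq
    rw [Set.Finite.mem_toFinset] at hq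
    obtain ⟨hqW, hqne⟩ := hq
    obtain ⟨h1, _, h3, h4⟩ := hprops q hqW
    have hlow : τ * Metric.infDist (dyCenter q.1 q.2) Ωᶜ ≤ 8 * (2:ℝ)^q.1 := by
      rw [hτ8] at h3; linarith
    have hhigh : (2:ℝ)^q.1 ≤ (τ/2) * Metric.infDist (dyCenter q.1 q.2) Ωᶜ := by
      rw [hτ2] at h4; linarith
    have hmeet : (Cube (dyCenter q.1 q.2) ((2:ℝ)^q.1) ∩ cloud Ω β x l).Nonempty := by
      obtain ⟨p, hp1, hp2⟩ := hqne
      exact ⟨p, dyCube_subset q.1 q.2 hp1, hp2⟩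
    calc μ (dyCube q.1 q.2) ≤ μ (Cube (dyCenter q.1 q.2) ((2:ℝ)^q.1)) :=
          measure_mono (dyCube_subset q.1 q.2)
      _ ≤ c'^N * μ (Cube x l) :=
          key hβ0 hβ1 hc1 hdb' hτ0 ht hQ hQ10 h1 hlow hhigh hmeet
  have hWtQ : WtQ Ω β W x l = ⋃ q ∈ hfin.toFinset, dyCube q.1 q.2 := by
    simp only [WtQ]
    ext y
    simp [Set.Finite.mem_toFinset]
  rw [hWtQ]
  calc μ (⋃ q ∈ hfin.toFinset, dyCube q.1 q.2)
      ≤ ∑ q ∈ hfin.toFinset, μ (dyCube q.1 q.2) := measure_biUnion_finset_le _ _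
    _ ≤ ∑ q ∈ hfin.toFinset, c'^N * μ (Cube x l) := Finset.sum_le_sum perCube
    _ = hfin.toFinset.card • (c'^N * μ (Cube x l)) := by rw [Finset.sum_const]
    _ = (hfin.toFinset.card : ℝ≥0∞) * (c'^N * μ (Cube x l)) := by rw [nsmul_eq_mul]
    _ ≤ (M:ℝ≥0∞) * (c'^N * μ (Cube x l)) := by
        apply mul_le_mul_left
        have : hfin.toFinset.card ≤ M := by
          rw [← Set.ncard_eq_toFinset_card _ hfin]
          exact hcard
        exact_mod_cast this
    _ = (M:ℝ≥0∞) * c'^N * μ (Cube x l) := by rw [mul_assoc]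
end
end

section
/- Let 0 < β < 1 and 0 < c₁ < c₂ < 1, and let {Q_i} be a pairwise disjoint collection of cubes Q_i = Q(x_i, l_i) ∈ F_β of Whitney type, i.e., c₁ < l_i / d_∞(x_i, Ω^c) < c₂ for all i. Then the clouds N_β(Q_i) have bounded overlap: there exists a natural number M > 0, depending only on β, c₁, c₂ (and n), such that Σ_i χ_{N_β(Q_i)}(x) ≤ M for every x ∈ Ω. -/
open MeasureTheory Metric Set
open scoped ENNReal

noncomputable section

lemma aux_count {ι : Type} {n : ℕ} (f : ι → Set (Fin n → ℝ)) (S : Set ι)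
    (ε : ℝ≥0∞) (hε0 : ε ≠ 0) (hεtop : ε ≠ ⊤) (M : ℕ)
    (hm : ∀ i, MeasurableSet (f i))
    (hd : S.PairwiseDisjoint f)
    (hle : ∀ i ∈ S, ε ≤ volume (f i))
    (U : Set (Fin n → ℝ)) (hsub : ∀ i ∈ S, f i ⊆ U)
    (hU : volume U ≤ ε * M) :
    S.Finite ∧ S.ncard ≤ M := by
  have claim : ∀ s : Finset ι, ↑s ⊆ S → s.card ≤ M := by
    intro s hs
    have h1 : ε * s.card ≤ volume U := by
      calc ε * s.card = ∑ _i ∈ s, ε := by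
            simp [Finset.sum_const, nsmul_eq_mul, mul_comm]
        _ ≤ ∑ i ∈ s, volume (f i) := Finset.sum_le_sum fun i hi => hle i (hs hi)
        _ = volume (⋃ i ∈ s, f i) :=
            (measure_biUnion_finset (hd.subset hs) fun i _ => hm i).symm
        _ ≤ volume U := measure_mono (Set.iUnion₂_subset fun i hi => hsub i (hs hi))
    have h2 : (s.card : ℝ≥0∞) ≤ (M : ℝ≥0∞) :=
      (ENNReal.mul_le_mul_iff_right hε0 hεtop).mp (h1.trans hU)
    exact_mod_cast h2
  have hfin : S.Finite := by
    by_contra h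
    obtain ⟨t, htS, htf, htc⟩ := Set.Infinite.exists_subset_ncard_eq h (M + 1)
    have h3 := claim htf.toFinset (by simpa using htS)
    rw [Set.ncard_eq_toFinset_card _ htf] at htc
    omega
  refine ⟨hfin, ?_⟩
  rw [Set.ncard_eq_toFinset_card _ hfin]
  exact claim hfin.toFinset (by simp)

/-- Lemma 2.6: clouds of a pairwise disjoint family of
Whitney-type cubes of `F_β` have bounded overlap, the bound `M` depending
only on `β`, `c₁`, `c₂` (and `n`). -/
theorem clouds_bounded_overlap {n : ℕ} (Ω : Set (Fin n → ℝ))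
    (hΩo : IsOpen Ω) (hΩne : Ω.Nonempty) (hΩpr : Ω ≠ Set.univ)
    (β c₁ c₂ : ℝ) (hβ0 : 0 < β) (hβ1 : β < 1)
    (hc₁ : 0 < c₁) (hc₁₂ : c₁ < c₂) (hc₂ : c₂ < 1) :
    ∃ M : ℕ, 0 < M ∧
      ∀ (ι : Type) (xc : ι → (Fin n → ℝ)) (lc : ι → ℝ),
        (∀ i, MemF Ω β (xc i) (lc i)) →
        (Pairwise fun i j => Disjoint (Cube (xc i) (lc i)) (Cube (xc j) (lc j))) →
        (∀ i, c₁ < lc i / Metric.infDist (xc i) Ωᶜ ∧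
          lc i / Metric.infDist (xc i) Ωᶜ < c₂) →
        ∀ x ∈ Ω, {i | x ∈ cloud Ω β (xc i) (lc i)}.Finite ∧
          {i | x ∈ cloud Ω β (xc i) (lc i)}.ncard ≤ M := by
  have h1β : (0:ℝ) < 1 - β := by linarith
  have h1c₂ : (0:ℝ) < 1 - c₂ := by linarith
  obtain ⟨A, hA_def⟩ : ∃ A : ℝ, A = β * (1 + c₂) / (1 - β) := ⟨_, rfl⟩
  have hA : 0 < A := by rw [hA_def]; exact div_pos (mul_pos hβ0 (by linarith)) h1β
  obtain ⟨B, hB_def⟩ : ∃ B : ℝ, B = 2 * A + c₂ := ⟨_, rfl⟩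
  have hB : 0 < B := by rw [hB_def]; linarith
  obtain ⟨K₂, hK₂_def⟩ : ∃ K : ℝ, K = (1 + β) / ((1 - β) * (1 - c₂)) := ⟨_, rfl⟩
  have hK₂ : 0 < K₂ := by rw [hK₂_def]; exact div_pos (by linarith) (mul_pos h1β h1c₂)
  obtain ⟨a, ha_def⟩ : ∃ a : ℝ, a = c₁ / (1 + B) := ⟨_, rfl⟩
  have ha : 0 < a := by rw [ha_def]; exact div_pos hc₁ (by linarith)
  obtain ⟨R, hR_def⟩ : ∃ R : ℝ, R = (c₂ + B) * K₂ := ⟨_, rfl⟩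
  have hR : 0 < R := by rw [hR_def]; exact mul_pos (by linarith) hK₂
  refine ⟨max 1 ⌈(R / a) ^ n⌉₊, lt_of_lt_of_le one_pos (le_max_left _ _), ?_⟩
  intro ι xc lc hF hpw hW x hx
  have hΩc : Ωᶜ.Nonempty := Set.nonempty_compl.mpr hΩpr
  have hdpos : ∀ z ∈ Ω, 0 < Metric.infDist z Ωᶜ := fun z hz =>
    (hΩo.isClosed_compl.notMem_iff_infDist_pos hΩc).mp (by simpa using hz)
  set d := Metric.infDist x Ωᶜ with hd_def
  have hd0 : 0 < d := hdpos x hx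
  -- key per-index facts
  have key : ∀ i, x ∈ cloud Ω β (xc i) (lc i) →
      a * d ≤ lc i ∧ Cube (xc i) (lc i) ⊆ Metric.closedBall x (R * d) := by
    intro i hxi
    simp only [cloud, Set.mem_iUnion] at hxi
    obtain ⟨c, r, ⟨hcΩ, hr0, hrβ⟩, ⟨y, hy1, hy2⟩, hxc⟩ := hxi
    set dc := Metric.infDist c Ωᶜ with hdc_def
    set di := Metric.infDist (xc i) Ωᶜ with hdi_def
    have hdc0 : 0 < dc := hdpos c hcΩ
    have hdi0 : 0 < di := hdpos (xc i) (hF i).1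
    have hli0 : 0 < lc i := (hF i).2.1
    have hc1i : c₁ * di < lc i := by
      have := (hW i).1
      rw [lt_div_iff₀ hdi0] at this; linarith
    have hc2i : lc i < c₂ * di := by
      have := (hW i).2
      rw [div_lt_iff₀ hdi0] at this; linarith
    -- distances
    have hxcd : dist x c ≤ r := Metric.mem_closedBall.mp hxc
    have hyc : dist y c ≤ r := Metric.mem_closedBall.mp hy1
    have hyi : dist y (xc i) ≤ lc i := Metric.mem_closedBall.mp hy2
    have hcxi : dist c (xc i) ≤ r + lc i := by
      calc dist c (xc i) ≤ dist c y + dist y (xc i) := dist_triangle _ _ _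
        _ ≤ r + lc i := by rw [dist_comm c y]; linarith
    have hxxi : dist x (xc i) ≤ 2 * r + lc i := by
      calc dist x (xc i) ≤ dist x c + dist c (xc i) := dist_triangle _ _ _
        _ ≤ 2 * r + lc i := by linarith
    -- infDist comparisons
    have hdc_le : dc ≤ d + r := by
      have h := Metric.infDist_le_infDist_add_dist (x := c) (y := x) (s := Ωᶜ)
      rw [dist_comm] at h; exact h.trans (by linarith)
    have hdc_le2 : dc ≤ di + (r + lc i) := by
      have h := Metric.infDist_le_infDist_add_dist (x := c) (y := xc i) (s := Ωᶜ)
      rw [dist_comm] at h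
      exact h.trans (by rw [dist_comm] at hcxi; linarith)
    have hdi_le : di ≤ dc + (r + lc i) := by
      have h := Metric.infDist_le_infDist_add_dist (x := xc i) (y := c) (s := Ωᶜ)
      rw [dist_comm] at h; exact h.trans (by linarith)
    have hd_le : d ≤ di + (2 * r + lc i) := by
      have h := Metric.infDist_le_infDist_add_dist (x := x) (y := xc i) (s := Ωᶜ)
      exact h.trans (by linarith)
    -- r < A * di
    have hrA : r < A * di := by
      have h1 : r * (1 - β) < β * (1 + c₂) * di := by
        linarith [mul_le_mul_of_nonneg_left hdc_le2 hβ0.le,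
          mul_lt_mul_of_pos_left hc2i hβ0]
      have h2 : A * di = β * (1 + c₂) * di / (1 - β) := by rw [hA_def]; ring
      rw [h2, lt_div_iff₀ h1β]; linarith
    have hdistB : dist x (xc i) < B * di := by
      have : B * di = 2 * (A * di) + c₂ * di := by rw [hB_def]; ring
      rw [this]; linarith
    have hd_le' : d ≤ di + dist x (xc i) :=
      Metric.infDist_le_infDist_add_dist (x := x) (y := xc i) (s := Ωᶜ)
    have hdgt : d < (1 + B) * di := by
      have e : (1 + B) * di = di + B * di := by ring
      linarith
    constructor
    · -- a * d ≤ lc i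
      have h1B : (0:ℝ) < 1 + B := by linarith
      have h2 : a * d = c₁ * d / (1 + B) := by rw [ha_def]; ring
      rw [h2, div_le_iff₀ h1B]
      linarith [mul_lt_mul_of_pos_left hdgt hc₁, mul_lt_mul_of_pos_left hc1i h1B]
    · -- subset
      have hdcK : dc * (1 - β) < d := by linarith
      have hdiK2 : di ≤ K₂ * d := by
        have h1 : di * (1 - c₂) < dc * (1 + β) := by linarith
        have h2 : di * ((1 - β) * (1 - c₂)) < (1 + β) * d := by
          linarith [mul_lt_mul_of_pos_right h1 h1β,
            mul_lt_mul_of_pos_right hdcK (by linarith : (0:ℝ) < 1 + β)]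
        have h3 : K₂ * d = (1 + β) * d / ((1 - β) * (1 - c₂)) := by rw [hK₂_def]; ring
        rw [h3, le_div_iff₀ (by positivity)]
        linarith
      have hsum : lc i + dist (xc i) x ≤ R * d := by
        rw [dist_comm]
        have h4 : R * d = (c₂ + B) * (K₂ * d) := by rw [hR_def]; ring
        rw [h4]
        linarith [mul_le_mul_of_nonneg_left hdiK2 (by linarith : (0:ℝ) ≤ c₂ + B)]
      exact Metric.closedBall_subset_closedBall' hsum
  -- apply the counting lemma
  have hMcast : ENNReal.ofReal ((R / a) ^ n) ≤ ((max 1 ⌈(R / a) ^ n⌉₊ : ℕ) : ℝ≥0∞) := by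
    rw [← ENNReal.ofReal_natCast]
    refine ENNReal.ofReal_le_ofReal ((Nat.le_ceil _).trans ?_)
    exact_mod_cast Nat.le_max_right 1 ⌈(R / a) ^ n⌉₊
  refine aux_count (fun i => Cube (xc i) (lc i)) _
    (ENNReal.ofReal ((2 * (a * d)) ^ n))
    (ENNReal.ofReal_pos.mpr (by positivity)).ne' ENNReal.ofReal_ne_top _
    (fun i => measurableSet_closedBall)
    (fun i _ j _ hij => hpw hij) ?_
    (Metric.closedBall x (R * d)) (fun i hi => (key i hi).2) ?_
  · intro i hi
    have h := (key i hi).1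
    calc ENNReal.ofReal ((2 * (a * d)) ^ n)
        = volume (Metric.closedBall (xc i) (a * d)) := by
          rw [Real.volume_pi_closedBall _ (by positivity), Fintype.card_fin]
      _ ≤ volume (Cube (xc i) (lc i)) :=
          measure_mono (Metric.closedBall_subset_closedBall h)
  · rw [Real.volume_pi_closedBall _ (by positivity), Fintype.card_fin]
    have he : (2 * (R * d)) ^ n = (2 * (a * d)) ^ n * (R / a) ^ n := by
      rw [← mul_pow]
      congr 1
      field_simp
    rw [he, ENNReal.ofReal_mul (by positivity)]
    exact mul_le_mul_right hMcast _
end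
end

section
/- Let 0 < β < 1, let f be a nonnegative locally integrable function, h > 0, and let Q ∈ F_β be a cube with |Q|^{-1} ∫_Q f > h and 10Q ∈ F_β. Then there exist a dyadic cube P and a positive constant c₁ = 5^n/24^n, independent of Q, such that Q ⊂ 5P ⊂ 8Q, 5P ∈ F_β, and |P|^{-1} ∫_P f > c₁·h. -/
open MeasureTheory Metric Set
open scoped ENNReal

noncomputable section

/-- A dyadic cube is contained in the closed cube with the same center and half side. -/
lemma dyCube_subset_cube {n : ℕ} (k : ℤ) (z : Fin n → ℤ) :
    dyCube k z ⊆ Cube (dyCenter k z) ((2:ℝ) ^ k) := by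
  intro y hy
  have h2 : (0:ℝ) < (2:ℝ) ^ k := by positivity
  have h2a : (2:ℝ) ^ (k + 1) = 2 * (2:ℝ) ^ k := by
    rw [zpow_add_one₀ (two_ne_zero : (2:ℝ) ≠ 0)]; ring
  simp only [Cube, Metric.mem_closedBall]
  rw [dist_pi_le_iff h2.le]
  intro i
  simp only [dyCube, Set.mem_pi, Set.mem_univ, forall_true_left, Set.mem_Ico] at hy
  obtain ⟨h1, h3⟩ := hy i
  rw [h2a] at h1 h3
  simp only [dyCenter, Real.dist_eq, abs_le]
  constructor <;> nlinarith [h1, h3]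

/-- Lemma 2.7 (i): if `|Q|⁻¹∫_Q f > h` and `10Q ∈ F_β`, then
there is a dyadic cube `P` with `Q ⊆ 5P ⊆ 8Q`, `5P ∈ F_β` and
`|P|⁻¹∫_P f > (5^n/24^n) h`. -/
theorem calderon_zygmund_selection_inside {n : ℕ} (Ω : Set (Fin n → ℝ))
    (hΩo : IsOpen Ω) (hΩne : Ω.Nonempty) (hΩpr : Ω ≠ Set.univ)
    (β : ℝ) (hβ0 : 0 < β) (hβ1 : β < 1)
    (f : (Fin n → ℝ) → ℝ) (hf0 : ∀ y, 0 ≤ f y)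
    (hfl : LocallyIntegrableOn f Ω)
    (h : ℝ) (hh : 0 < h)
    (x : Fin n → ℝ) (l : ℝ) (hQ : MemF Ω β x l)
    (h10Q : MemF Ω β x (10 * l))
    (havg : ENNReal.ofReal h < avgI f (Cube x l)) :
    ∃ (xP : Fin n → ℝ) (lP : ℝ), IsDyadic xP lP ∧
      Cube x l ⊆ Cube xP (5 * lP) ∧
      Cube xP (5 * lP) ⊆ Cube x (8 * l) ∧
      MemF Ω β xP (5 * lP) ∧
      ENNReal.ofReal ((5 ^ n / 24 ^ n) * h) < avgI f (Cube xP lP) := by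
  obtain ⟨hxΩ, hl0, hlβ⟩ := hQ
  set k : ℤ := Int.log 2 l with hkdef
  set a : ℝ := (2:ℝ) ^ k with hadef
  have ha0 : (0:ℝ) < a := by rw [hadef]; positivity
  have hal : a ≤ l := by
    rw [hadef, hkdef]; exact Int.zpow_log_le_self (by norm_num) hl0
  set s : ℝ := 2 * a with hsdef
  have hs0 : (0:ℝ) < s := by rw [hsdef]; linarith
  have h2a : (2:ℝ) ^ (k + 1) = s := by
    rw [hsdef, hadef, zpow_add_one₀ (two_ne_zero : (2:ℝ) ≠ 0)]; ring
  have hla : l < s := by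
    have h := Int.lt_zpow_succ_log_self (b := 2) (by norm_num) l
    rw [← hkdef] at h
    push_cast at h
    rw [h2a] at h
    exact h
  set m : Fin n → ℤ := fun i => ⌊(x i - l) / s⌋ with hmdef
  set z : (Fin n → Fin 3) → Fin n → ℤ := fun ε i => m i + (ε i : ℤ) with hzdef
  set g : (Fin n → Fin 3) → ℝ≥0∞ := fun ε =>
    ∫⁻ y in dyCube k (z ε) ∩ Cube x l, ENNReal.ofReal |f y| with hgdef
  -- covering of Q by the 3^n candidate dyadic cubes
  have hcov : Cube x l ⊆ ⋃ ε : Fin n → Fin 3, (dyCube k (z ε) ∩ Cube x l) := by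
    intro y hy
    have hyd : dist y x ≤ l := by simpa [Cube, Metric.mem_closedBall] using hy
    have hy' : ∀ i, x i - l ≤ y i ∧ y i ≤ x i + l := by
      intro i
      have h1 : dist (y i) (x i) ≤ l := le_trans (dist_le_pi_dist y x i) hyd
      rw [Real.dist_eq, abs_le] at h1
      constructor <;> linarith [h1.1, h1.2]
    have key : ∀ i, m i ≤ ⌊y i / s⌋ ∧ ⌊y i / s⌋ ≤ m i + 2 := by
      intro i
      obtain ⟨hlo, hhi⟩ := hy' i
      constructor
      · rw [hmdef]; exact Int.floor_le_floor (by gcongr)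
      · have h2 : y i / s ≤ (x i - l) / s + 2 := by
          have hy2 : y i ≤ (x i - l) + 2 * s := by linarith
          calc y i / s ≤ ((x i - l) + 2 * s) / s := by gcongr
            _ = (x i - l) / s + 2 := by field_simp
        calc ⌊y i / s⌋ ≤ ⌊(x i - l) / s + 2⌋ := Int.floor_le_floor h2
          _ = m i + 2 := by
              rw [show ((2:ℝ) = ((2:ℤ):ℝ)) by norm_num, Int.floor_add_intCast, hmdef]
    refine Set.mem_iUnion.mpr ⟨fun i => ⟨(⌊y i / s⌋ - m i).toNat, by have := key i; omega⟩, ?_, hy⟩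
    simp only [dyCube, Set.mem_pi, Set.mem_univ, forall_true_left]
    intro i
    have hzi : z (fun i => ⟨(⌊y i / s⌋ - m i).toNat, by have := key i; omega⟩) i = ⌊y i / s⌋ := by
      simp only [hzdef]
      have := key i
      omega
    rw [hzi, h2a]
    constructor
    · exact (le_div_iff₀ hs0).mp (Int.floor_le _)
    · exact (div_lt_iff₀ hs0).mp (Int.lt_floor_add_one _)
  -- sum bound
  have hIQ : (∫⁻ y in Cube x l, ENNReal.ofReal |f y|) ≤ ∑ ε : Fin n → Fin 3, g ε := by
    calc (∫⁻ y in Cube x l, ENNReal.ofReal |f y|)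
        ≤ ∫⁻ y in ⋃ ε : Fin n → Fin 3, (dyCube k (z ε) ∩ Cube x l), ENNReal.ofReal |f y| :=
          lintegral_mono_set hcov
      _ ≤ ∑' ε : Fin n → Fin 3, g ε := lintegral_iUnion_le _ _
      _ = ∑ ε : Fin n → Fin 3, g ε := tsum_fintype _
  obtain ⟨ε₀, -, hmax⟩ :=
    (Finset.univ : Finset (Fin n → Fin 3)).exists_max_image g ⟨default, Finset.mem_univ _⟩
  have hsum_le : ∑ ε : Fin n → Fin 3, g ε ≤ (3:ℝ≥0∞) ^ n * g ε₀ := by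
    calc ∑ ε : Fin n → Fin 3, g ε ≤ ∑ _ε : Fin n → Fin 3, g ε₀ :=
          Finset.sum_le_sum fun ε _ => hmax ε (Finset.mem_univ _)
      _ = ((Finset.univ : Finset (Fin n → Fin 3)).card : ℝ≥0∞) * g ε₀ := by
          rw [Finset.sum_const, nsmul_eq_mul]
      _ = (3:ℝ≥0∞) ^ n * g ε₀ := by
          rw [Finset.card_univ, Fintype.card_fun]
          push_cast
          simp
  -- volumes
  have hvolQ : volume (Cube x l) = ENNReal.ofReal ((2 * l) ^ n) := by
    simp only [Cube]
    rw [Real.volume_pi_closedBall x hl0.le, Fintype.card_fin]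
  have hQ0 : volume (Cube x l) ≠ 0 := by
    rw [hvolQ]
    exact (ENNReal.ofReal_pos.mpr (by positivity)).ne'
  have hQt : volume (Cube x l) ≠ ⊤ := by rw [hvolQ]; exact ENNReal.ofReal_ne_top
  have hIQ_lt : ENNReal.ofReal h * volume (Cube x l)
      < ∫⁻ y in Cube x l, ENNReal.ofReal |f y| := by
    have h1 := (ENNReal.mul_lt_mul_iff_left hQ0 hQt).mpr havg
    rw [avgI, mul_right_comm, ENNReal.inv_mul_cancel hQ0 hQt, one_mul] at h1
    exact h1
  -- the maximal cube meets Q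
  have hg0 : g ε₀ ≠ 0 := by
    intro hg
    have h1 : (0:ℝ≥0∞) < ENNReal.ofReal h * volume (Cube x l) :=
      ENNReal.mul_pos (ENNReal.ofReal_pos.mpr hh).ne' hQ0
    have h2 := lt_of_lt_of_le hIQ_lt (le_trans hIQ hsum_le)
    rw [hg, mul_zero] at h2
    exact absurd h2 (by simp)
  have hne : (dyCube k (z ε₀) ∩ Cube x l).Nonempty := by
    rcases Set.eq_empty_or_nonempty (dyCube k (z ε₀) ∩ Cube x l) with he | hne
    · exact absurd (by rw [hgdef]; simp only [he, Measure.restrict_empty,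
        lintegral_zero_measure]) hg0
    · exact hne
  set xP : Fin n → ℝ := dyCenter k (z ε₀) with hxPdef
  have hsubP : dyCube k (z ε₀) ⊆ Cube xP a := by
    rw [hadef]; exact dyCube_subset_cube k (z ε₀)
  obtain ⟨y₀, hy₀P, hy₀Q⟩ := hne
  have hdP : dist y₀ xP ≤ a := by
    have := hsubP hy₀P
    simpa [Cube, Metric.mem_closedBall] using this
  have hdQ : dist y₀ x ≤ l := by simpa [Cube, Metric.mem_closedBall] using hy₀Q
  have hdxxP : dist x xP ≤ l + a := by
    calc dist x xP ≤ dist x y₀ + dist y₀ xP := dist_triangle _ _ _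
      _ ≤ l + a := add_le_add (by rw [dist_comm]; exact hdQ) hdP
  refine ⟨xP, a, ⟨k, z ε₀, hadef, hxPdef⟩, ?_, ?_, ?_, ?_⟩
  · show Metric.closedBall x l ⊆ Metric.closedBall xP (5 * a)
    exact Metric.closedBall_subset_closedBall' (by linarith)
  · show Metric.closedBall xP (5 * a) ⊆ Metric.closedBall x (8 * l)
    refine Metric.closedBall_subset_closedBall' ?_
    rw [dist_comm]
    linarith
  · -- MemF Ω β xP (5 * a)
    have hd10 : 10 * l < β * Metric.infDist x Ωᶜ := h10Q.2.2
    have hdist : Metric.infDist x Ωᶜ ≤ Metric.infDist xP Ωᶜ + dist x xP :=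
      Metric.infDist_le_infDist_add_dist
    have hβd : 8 * l < β * Metric.infDist xP Ωᶜ := by
      have h1 : β * Metric.infDist x Ωᶜ ≤ β * (Metric.infDist xP Ωᶜ + dist x xP) :=
        mul_le_mul_of_nonneg_left hdist hβ0.le
      have h2 : β * dist x xP ≤ 1 * (l + a) :=
        mul_le_mul hβ1.le hdxxP dist_nonneg zero_le_one
      nlinarith
    have hDP : 0 < Metric.infDist xP Ωᶜ := by
      by_contra hc
      push_neg at hc
      nlinarith
    have hxPΩ : xP ∈ Ω := by
      by_contra hc
      have h0 : Metric.infDist xP Ωᶜ = 0 := Metric.infDist_zero_of_mem (by simpa using hc)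
      linarith
    exact ⟨hxPΩ, by linarith, by linarith⟩
  · -- the average estimate
    have hvolP : volume (Cube xP a) = ENNReal.ofReal ((2 * a) ^ n) := by
      simp only [Cube]
      rw [Real.volume_pi_closedBall xP ha0.le, Fintype.card_fin]
    have hP0 : volume (Cube xP a) ≠ 0 := by
      rw [hvolP]
      exact (ENNReal.ofReal_pos.mpr (by positivity)).ne'
    have hPt : volume (Cube xP a) ≠ ⊤ := by rw [hvolP]; exact ENNReal.ofReal_ne_top
    have hPge : g ε₀ ≤ ∫⁻ y in Cube xP a, ENNReal.ofReal |f y| := by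
      rw [hgdef]
      exact lintegral_mono_set (le_trans Set.inter_subset_left hsubP)
    have hreal : ((5:ℝ) ^ n / 24 ^ n * h) * ((2 * a) ^ n) * 3 ^ n ≤ h * (2 * l) ^ n := by
      have hb : ((5:ℝ) ^ n / 24 ^ n) * ((2 * a) ^ n) * 3 ^ n = (5 / 4 * a) ^ n := by
        rw [← div_pow, ← mul_pow, ← mul_pow]
        congr 1
        ring
      have hpow : ((5:ℝ) / 4 * a) ^ n ≤ (2 * l) ^ n := by
        apply pow_le_pow_left₀ (by positivity)
        linarith
      calc ((5:ℝ) ^ n / 24 ^ n * h) * ((2 * a) ^ n) * 3 ^ n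
          = h * (((5:ℝ) ^ n / 24 ^ n) * ((2 * a) ^ n) * 3 ^ n) := by ring
        _ = h * ((5 / 4 * a) ^ n) := by rw [hb]
        _ ≤ h * (2 * l) ^ n := by
            apply mul_le_mul_of_nonneg_left hpow hh.le
    have hkey : ENNReal.ofReal ((5 ^ n / 24 ^ n) * h) * volume (Cube xP a) * (3:ℝ≥0∞) ^ n
        ≤ ENNReal.ofReal h * volume (Cube x l) := by
      rw [hvolP, hvolQ]
      have h3 : (3:ℝ≥0∞) ^ n = ENNReal.ofReal ((3:ℝ) ^ n) := by
        rw [ENNReal.ofReal_pow (by norm_num : (0:ℝ) ≤ 3)]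
        norm_num
      rw [h3, ← ENNReal.ofReal_mul (by positivity), ← ENNReal.ofReal_mul (by positivity),
        ← ENNReal.ofReal_mul hh.le]
      exact ENNReal.ofReal_le_ofReal hreal
    have hmain : ENNReal.ofReal ((5 ^ n / 24 ^ n) * h) * volume (Cube xP a)
        < ∫⁻ y in Cube xP a, ENNReal.ofReal |f y| := by
      have h1 : ENNReal.ofReal ((5 ^ n / 24 ^ n) * h) * volume (Cube xP a) * (3:ℝ≥0∞) ^ n
          < (∫⁻ y in Cube xP a, ENNReal.ofReal |f y|) * (3:ℝ≥0∞) ^ n := by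
        calc ENNReal.ofReal ((5 ^ n / 24 ^ n) * h) * volume (Cube xP a) * (3:ℝ≥0∞) ^ n
            ≤ ENNReal.ofReal h * volume (Cube x l) := hkey
          _ < ∫⁻ y in Cube x l, ENNReal.ofReal |f y| := hIQ_lt
          _ ≤ (3:ℝ≥0∞) ^ n * g ε₀ := le_trans hIQ hsum_le
          _ ≤ (3:ℝ≥0∞) ^ n * ∫⁻ y in Cube xP a, ENNReal.ofReal |f y| :=
              mul_le_mul_right hPge _
          _ = (∫⁻ y in Cube xP a, ENNReal.ofReal |f y|) * (3:ℝ≥0∞) ^ n := mul_comm _ _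
      exact (ENNReal.mul_lt_mul_iff_left (by positivity) (by
        simp [ENNReal.pow_ne_top])).mp h1
    rw [avgI]
    calc ENNReal.ofReal ((5 ^ n / 24 ^ n) * h)
        = (volume (Cube xP a))⁻¹ *
            (ENNReal.ofReal ((5 ^ n / 24 ^ n) * h) * volume (Cube xP a)) := by
          rw [mul_comm (ENNReal.ofReal _) (volume _), ← mul_assoc,
            ENNReal.inv_mul_cancel hP0 hPt, one_mul]
      _ < (volume (Cube xP a))⁻¹ * ∫⁻ y in Cube xP a, ENNReal.ofReal |f y| := by
          exact (ENNReal.mul_lt_mul_iff_right (ENNReal.inv_ne_zero.mpr hPt)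
            (ENNReal.inv_ne_top.mpr hP0)).mpr hmain
end
end

section
/- Let 0 < β < 1, let t ∈ ℕ with 2^{-t} ≤ β/5 and let W_t be the dyadic covering of Ω from the covering lemma. Let f be a nonnegative locally integrable function, h > 0, and let Q ∈ F_β be a cube with |Q|^{-1} ∫_Q f > h and 10Q ∉ F_β. Then there exist a dyadic cube R ∈ W_t and a positive constant c₂, independent of Q, such that Q ⊂ W_{t,Q} (the union of the cubes of W_t meeting N_β(Q)) contains Q, R ∩ N_β(Q) ≠ ∅, and |R|^{-1} ∫_R f > c₂·h. -/
open MeasureTheory Metric Set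
open scoped ENNReal

noncomputable section

lemma dyCube_measurable {n : ℕ} (k : ℤ) (z : Fin n → ℤ) : MeasurableSet (dyCube k z) :=
  MeasurableSet.univ_pi fun _ => measurableSet_Ico

lemma vol_Cube {n : ℕ} (x : Fin n → ℝ) {l : ℝ} (hl : 0 ≤ l) :
    volume (Cube x l) = ENNReal.ofReal (2*l) ^ n := by
  rw [Cube, closedBall_pi x hl, volume_pi_pi]
  simp [Real.volume_closedBall]

lemma vol_dyCube {n : ℕ} (k : ℤ) (z : Fin n → ℤ) :
    volume (dyCube k z) = ENNReal.ofReal (2*(2:ℝ)^k) ^ n := by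
  rw [dyCube, volume_pi_pi]
  have hv : ∀ i : Fin n, volume (Ico ((z i:ℝ) * 2^(k+1)) (((z i:ℝ)+1) * 2^(k+1)))
      = ENNReal.ofReal (2*(2:ℝ)^k) := by
    intro i
    rw [Real.volume_Ico]
    congr 1
    rw [zpow_add₀ (by norm_num : (2:ℝ) ≠ 0), zpow_one]; ring
  simp [hv]

set_option maxHeartbeats 1600000 in
/-- Lemma 2.7 (ii): if `|Q|⁻¹∫_Q f > h` and `10Q ∉ F_β`, then
`Q ⊆ W_{t,Q}` and there is a cube `R ∈ W_t` meeting `N_β(Q)` with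
`|R|⁻¹∫_R f > c₂ h`, the constant `c₂ > 0` being independent of `Q`. -/
theorem calderon_zygmund_selection_boundary {n : ℕ} (Ω : Set (Fin n → ℝ))
    (hΩo : IsOpen Ω) (hΩne : Ω.Nonempty) (hΩpr : Ω ≠ Set.univ)
    (β : ℝ) (hβ0 : 0 < β) (hβ1 : β < 1)
    (t : ℕ) (ht : (2:ℝ) ^ (-(t:ℤ)) ≤ β / 5)
    (W : Set (ℤ × (Fin n → ℤ))) (hW : IsWt Ω β t W)
    (f : (Fin n → ℝ) → ℝ) (hf0 : ∀ y, 0 ≤ f y)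
    (hfl : LocallyIntegrableOn f Ω)
    (h : ℝ) (hh : 0 < h) :
    ∃ c₂ : ℝ, 0 < c₂ ∧
      ∀ x l, MemF Ω β x l → ¬ MemF Ω β x (10 * l) →
        ENNReal.ofReal h < avgI f (Cube x l) →
        Cube x l ⊆ WtQ Ω β W x l ∧
        ∃ q ∈ W, (dyCube q.1 q.2 ∩ cloud Ω β x l).Nonempty ∧
          ENNReal.ofReal (c₂ * h) < avgI f (dyCube q.1 q.2) := by
  obtain ⟨hcover, hdisj, hprops, M, hM⟩ := hW
  have h1β : (0:ℝ) < 1 - β := by linarith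
  obtain ⟨A, hA_def⟩ : ∃ A : ℝ, A = (10 * (1 - β) + β * (1 - β) + 2 * β * (10 + β)) / (β * (1 - β)) :=
    ⟨_, rfl⟩
  have hA : 0 < A := by rw [hA_def]; positivity
  refine ⟨1 / ((M + 1) * A ^ n), by positivity, ?_⟩
  intro x l hQ hQ10 havg
  obtain ⟨hxΩ, hl0, hlβ⟩ := hQ
  set d := Metric.infDist x Ωᶜ with hd_def
  have hd0 : 0 < d := by
    by_contra hc
    push_neg at hc
    nlinarith
  have hdle : β * d ≤ 10 * l := by
    by_contra hc
    push_neg at hc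
    exact hQ10 ⟨hxΩ, by linarith, by linarith⟩
  have hmemΩ : ∀ y : Fin n → ℝ, dist y x < d → y ∈ Ω := by
    intro y hy
    by_contra hyc
    have h0 : Metric.infDist y Ωᶜ = 0 := Metric.infDist_zero_of_mem hyc
    have h1 : d ≤ Metric.infDist y Ωᶜ + dist x y := Metric.infDist_le_infDist_add_dist
    rw [h0, zero_add, dist_comm] at h1
    exact absurd hy (not_lt.mpr h1)
  -- key geometric bound: dyadic cubes meeting the cloud have side `≤ A l`
  have hkey : ∀ q ∈ W, (dyCube q.1 q.2 ∩ cloud Ω β x l).Nonempty → (2:ℝ) ^ q.1 ≤ A * l := by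
    rintro q hqW ⟨y, hydy, hycl⟩
    simp only [cloud, Set.mem_iUnion] at hycl
    obtain ⟨c, r, hcr, ⟨z', hz'⟩, hyc⟩ := hycl
    obtain ⟨hcΩ, hr0, hrβ⟩ := hcr
    have hz'c : dist z' c ≤ r := Metric.mem_closedBall.mp hz'.1
    have hz'x : dist z' x ≤ l := Metric.mem_closedBall.mp hz'.2
    have hyc' : dist y c ≤ r := Metric.mem_closedBall.mp hyc
    have h1 : Metric.infDist c Ωᶜ ≤ Metric.infDist z' Ωᶜ + dist c z' :=
      Metric.infDist_le_infDist_add_dist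
    have h2 : Metric.infDist z' Ωᶜ ≤ d + dist z' x := Metric.infDist_le_infDist_add_dist
    rw [dist_comm c z'] at h1
    have hdc : Metric.infDist c Ωᶜ ≤ d + l + r := by linarith
    have hr_bound : r * (1 - β) ≤ (10 + β) * l := by
      nlinarith [mul_le_mul_of_nonneg_left hdc hβ0.le]
    have hyx : dist y x ≤ 2 * r + l := by
      calc dist y x ≤ dist y c + dist c z' + dist z' x := dist_triangle4 y c z' x
        _ ≤ r + r + l := by rw [dist_comm c z']; linarith
        _ = 2 * r + l := by ring
    obtain ⟨hq1, hq2, hq3, hq4⟩ := hprops q hqW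
    have hk2pos : (0:ℝ) < (2:ℝ) ^ q.1 := zpow_pos (by norm_num) _
    have hycR : dist y (dyCenter q.1 q.2) ≤ (2:ℝ) ^ q.1 :=
      Metric.mem_closedBall.mp (dyCube_subset_cube q.1 q.2 hydy)
    have h3 : Metric.infDist (dyCenter q.1 q.2) Ωᶜ ≤ Metric.infDist y Ωᶜ + dist (dyCenter q.1 q.2) y :=
      Metric.infDist_le_infDist_add_dist
    have h4 : Metric.infDist y Ωᶜ ≤ d + dist y x := Metric.infDist_le_infDist_add_dist
    rw [dist_comm (dyCenter q.1 q.2) y] at h3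
    have hdR : Metric.infDist (dyCenter q.1 q.2) Ωᶜ ≤ d + (2*r + l) + (2:ℝ) ^ q.1 := by linarith
    have h2t1 : (2:ℝ) ^ (-(t:ℤ) - 1) ≤ 1/2 := by
      have he : (2:ℝ) ^ (-(t:ℤ) - 1) = (2:ℝ) ^ (-(t:ℤ)) / 2 := by
        rw [zpow_sub₀ (by norm_num : (2:ℝ) ≠ 0), zpow_one]
      rw [he]
      linarith
    have hdRnn : 0 ≤ Metric.infDist (dyCenter q.1 q.2) Ωᶜ := Metric.infDist_nonneg
    have hk2le : (2:ℝ) ^ q.1 ≤ d + 2*r + l := by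
      nlinarith [mul_le_mul_of_nonneg_right h2t1 hdRnn]
    have hpos : 0 < β * (1 - β) := by positivity
    rw [← mul_le_mul_iff_of_pos_right hpos]
    calc (2:ℝ) ^ q.1 * (β * (1 - β))
        ≤ (10 * (1 - β) + β * (1 - β) + 2 * β * (10 + β)) * l := by
          nlinarith [mul_le_mul_of_nonneg_right hdle h1β.le,
            mul_le_mul_of_nonneg_left hr_bound (by positivity : (0:ℝ) ≤ 2*β),
            mul_le_mul_of_nonneg_right hk2le (by positivity : (0:ℝ) ≤ β*(1-β))]
      _ = A * l * (β * (1 - β)) := by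
          rw [hA_def]; field_simp
  -- `Q ⊆ W_{t,Q}`
  have hsub : Cube x l ⊆ WtQ Ω β W x l := by
    intro y hy
    have hyl : dist y x ≤ l := Metric.mem_closedBall.mp hy
    have hyΩ : y ∈ Ω := hmemΩ y (by nlinarith)
    obtain ⟨q, hqW, hydy⟩ := Set.mem_iUnion₂.mp (hcover hyΩ)
    have hyc : y ∈ Cube (dyCenter q.1 q.2) ((2:ℝ) ^ q.1) := dyCube_subset_cube _ _ hydy
    have hycl : y ∈ cloud Ω β x l := by
      simp only [cloud, Set.mem_iUnion]
      exact ⟨dyCenter q.1 q.2, (2:ℝ)^q.1, (hprops q hqW).1, ⟨y, hyc, hy⟩, hyc⟩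
    exact Set.mem_biUnion (Set.mem_sep hqW ⟨y, hydy, hycl⟩) hydy
  refine ⟨hsub, ?_⟩
  obtain ⟨hSfin, hScard⟩ := hM x l ⟨hxΩ, hl0, hlβ⟩ hQ10
  by_contra hcon
  push_neg at hcon
  have hVQ0 : ENNReal.ofReal (2*l) ≠ 0 := by
    simp only [ne_eq, ENNReal.ofReal_eq_zero, not_le]; linarith
  have hVQt : ENNReal.ofReal (2*l) ≠ ⊤ := ENNReal.ofReal_ne_top
  have hIQ : ENNReal.ofReal h * ENNReal.ofReal (2*l) ^ n
      < ∫⁻ y in Cube x l, ENNReal.ofReal |f y| := by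
    rw [avgI, vol_Cube x (by linarith), ← ENNReal.div_eq_inv_mul] at havg
    exact (ENNReal.lt_div_iff_mul_lt (Or.inl (pow_ne_zero _ hVQ0))
      (Or.inl (ENNReal.pow_ne_top hVQt))).mp havg
  have hsum : ∫⁻ y in WtQ Ω β W x l, ENNReal.ofReal |f y|
      = ∑ q ∈ hSfin.toFinset, ∫⁻ y in dyCube q.1 q.2, ENNReal.ofReal |f y| := by
    rw [WtQ]
    have hU : ⋃ q ∈ {q ∈ W | (dyCube q.1 q.2 ∩ cloud Ω β x l).Nonempty}, dyCube q.1 q.2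
        = ⋃ q ∈ hSfin.toFinset, dyCube q.1 q.2 := by
      ext y; simp [hSfin.mem_toFinset]
    rw [hU]
    refine lintegral_biUnion_finset ?_ (fun q _ => dyCube_measurable q.1 q.2) _
    refine Set.PairwiseDisjoint.subset hdisj ?_
    rw [hSfin.coe_toFinset]
    exact Set.sep_subset _ _
  have hchain : ∫⁻ y in Cube x l, ENNReal.ofReal |f y|
      ≤ ∑ q ∈ hSfin.toFinset, ∫⁻ y in dyCube q.1 q.2, ENNReal.ofReal |f y| := by
    rw [← hsum]
    exact lintegral_mono' (Measure.restrict_mono hsub le_rfl) le_rfl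
  have hterm : ∀ q ∈ hSfin.toFinset,
      ∫⁻ y in dyCube q.1 q.2, ENNReal.ofReal |f y|
        ≤ ENNReal.ofReal ((2*l)^n * (h / (M+1))) := by
    intro q hq
    rw [hSfin.mem_toFinset] at hq
    obtain ⟨hqW, hne⟩ := hq
    have hk2 : (2:ℝ)^q.1 ≤ A * l := hkey q hqW hne
    have havgq := hcon q hqW hne
    have hk2pos : (0:ℝ) < (2:ℝ)^q.1 := zpow_pos (by norm_num) _
    have hVR0 : ENNReal.ofReal (2*(2:ℝ)^q.1) ≠ 0 := by
      simp only [ne_eq, ENNReal.ofReal_eq_zero, not_le]; linarith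
    have hI : ∫⁻ y in dyCube q.1 q.2, ENNReal.ofReal |f y|
        ≤ volume (dyCube q.1 q.2) * ENNReal.ofReal (1/((M+1)*A^n) * h) := by
      have hmul := mul_le_mul_right havgq (volume (dyCube q.1 q.2))
      rwa [avgI, ← mul_assoc, ENNReal.mul_inv_cancel
        (by rw [vol_dyCube]; exact pow_ne_zero _ hVR0)
        (by rw [vol_dyCube]; exact ENNReal.pow_ne_top ENNReal.ofReal_ne_top),
        one_mul] at hmul
    have hAn : (A:ℝ)^n ≠ 0 := by positivity
    have hreal : (2*(A*l))^n * (1/((M+1)*A^n) * h) = (2*l)^n * (h/(M+1)) := by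
      field_simp
      ring
    calc ∫⁻ y in dyCube q.1 q.2, ENNReal.ofReal |f y|
        ≤ volume (dyCube q.1 q.2) * ENNReal.ofReal (1/((M+1)*A^n) * h) := hI
      _ ≤ ENNReal.ofReal (2*(A*l)) ^ n * ENNReal.ofReal (1/((M+1)*A^n) * h) := by
          rw [vol_dyCube]
          gcongr
      _ = ENNReal.ofReal ((2*l)^n * (h/(M+1))) := by
          rw [← ENNReal.ofReal_pow (by positivity : (0:ℝ) ≤ 2*(A*l)),
            ← ENNReal.ofReal_mul (by positivity : (0:ℝ) ≤ (2*(A*l))^n), hreal]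
  have hcard : (hSfin.toFinset.card : ℝ≥0∞) ≤ (M : ℝ≥0∞) := by
    rw [← Set.ncard_eq_toFinset_card _ hSfin]
    exact_mod_cast hScard
  have hsumle : ∑ q ∈ hSfin.toFinset, ∫⁻ y in dyCube q.1 q.2, ENNReal.ofReal |f y|
      ≤ (M:ℝ≥0∞) * ENNReal.ofReal ((2*l)^n * (h/(M+1))) := by
    calc ∑ q ∈ hSfin.toFinset, ∫⁻ y in dyCube q.1 q.2, ENNReal.ofReal |f y|
        ≤ hSfin.toFinset.card • ENNReal.ofReal ((2*l)^n * (h/(M+1))) :=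
          Finset.sum_le_card_nsmul _ _ _ hterm
      _ = (hSfin.toFinset.card : ℝ≥0∞) * ENNReal.ofReal ((2*l)^n * (h/(M+1))) := by
          rw [nsmul_eq_mul]
      _ ≤ (M:ℝ≥0∞) * ENNReal.ofReal ((2*l)^n * (h/(M+1))) := by gcongr
  have hfinal : (M:ℝ≥0∞) * ENNReal.ofReal ((2*l)^n * (h/(M+1)))
      ≤ ENNReal.ofReal h * ENNReal.ofReal (2*l) ^ n := by
    rw [← ENNReal.ofReal_natCast M, ← ENNReal.ofReal_mul (by positivity),
      ← ENNReal.ofReal_pow (by linarith : (0:ℝ) ≤ 2*l),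
      ← ENNReal.ofReal_mul hh.le]
    apply ENNReal.ofReal_le_ofReal
    have hM1 : (M:ℝ)/(M+1) ≤ 1 := by
      rw [div_le_one (by positivity)]; linarith
    calc (M:ℝ) * ((2*l)^n * (h/(M+1))) = ((M:ℝ)/(M+1)) * (h * (2*l)^n) := by ring
      _ ≤ 1 * (h * (2*l)^n) := by
          apply mul_le_mul_of_nonneg_right hM1 (by positivity)
      _ = h * (2*l)^n := one_mul _
  exact absurd (lt_of_lt_of_le hIQ (le_trans hchain (le_trans hsumle hfinal)))
    (lt_irrefl _)
end
end

section
/- Let 1 < p ≤ q < ∞ and 0 < α < β < 1. Let u and v be weights such that u ∈ D_α and σ = v^{-1/(p-1)} ∈ D_α. Then (u,v) ∈ A_{p,q}^β if and only if (u,v) ∈ A_{p,q}^α; that is, the classes A_{p,q}^β and A_{p,q}^α coincide. -/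
open MeasureTheory Metric Set
open scoped ENNReal

noncomputable section

lemma cover_bound {n : ℕ} (Ω : Set (Fin n → ℝ)) (α β : ℝ)
    (hα0 : 0 < α) (hαβ : α < β) (hβ1 : β < 1)
    (w : (Fin n → ℝ) → ℝ) (C : ℝ≥0∞) (hC1 : 1 ≤ C)
    (hD : ∀ x l, MemF Ω α x l → MemF Ω α x (2*l) →
      wMeas w (Cube x (2*l)) ≤ C * wMeas w (Cube x l))
    (M : ℕ) (hM : 8/(α*(1-β)) + 1 ≤ (M:ℝ))
    (x : Fin n → ℝ) (hx : x ∈ Ω) (hd : 0 < Metric.infDist x Ωᶜ) (l : ℝ)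
    (hl0 : 0 < l) (hlα : α * Metric.infDist x Ωᶜ ≤ l)
    (hlβ : l < β * Metric.infDist x Ωᶜ) :
    wMeas w (Cube x l) ≤ (((2*M+1)^n : ℕ) : ℝ≥0∞) * C^M *
      wMeas w (Cube x (α*(1-β)*Metric.infDist x Ωᶜ/8)) := by
  set d := Metric.infDist x Ωᶜ with hdef
  have hβ' : 0 < 1 - β := by linarith
  have hα1 : α < 1 := by linarith
  set r : ℝ := α*(1-β)*d/8 with hrdef
  have hr : 0 < r := by positivity
  have hld : l < d := by nlinarith
  -- lower bound on infDist of nearby points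
  have hinf : ∀ y : Fin n → ℝ, dist y x ≤ l + r →
      (7/8)*((1-β)*d) ≤ Metric.infDist y Ωᶜ := by
    intro y hy
    have h1 : d ≤ Metric.infDist y Ωᶜ + dist x y :=
      Metric.infDist_le_infDist_add_dist
    rw [dist_comm] at h1
    nlinarith
  have hmemF : ∀ y : Fin n → ℝ, dist y x ≤ l + r →
      MemF Ω α y r ∧ MemF Ω α y (2*r) := by
    intro y hy
    have h1 := hinf y hy
    have h2 : 2*r < α * Metric.infDist y Ωᶜ := by nlinarith
    have hyΩ : y ∈ Ω := by
      by_contra hc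
      have : y ∈ Ωᶜ := hc
      have := Metric.infDist_zero_of_mem this
      nlinarith
    exact ⟨⟨hyΩ, hr, by linarith⟩, ⟨hyΩ, by linarith, h2⟩⟩
  -- pass to the withDensity measure
  set ν : Measure (Fin n → ℝ) :=
    volume.withDensity (fun y => ENNReal.ofReal (w y)) with hν
  have hw : ∀ (c : Fin n → ℝ) (t : ℝ), wMeas w (Cube c t) = ν (Cube c t) := by
    intro c t
    exact (withDensity_apply _ measurableSet_closedBall).symm
  -- one doubling step
  have step : ∀ y z : Fin n → ℝ, dist y x ≤ l + r → dist z y ≤ r →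
      ν (Cube z r) ≤ C * ν (Cube y r) := by
    intro y z hy hz
    obtain ⟨h1, h2⟩ := hmemF y hy
    have hsub : Cube z r ⊆ Cube y (2*r) :=
      closedBall_subset_closedBall' (by linarith)
    calc ν (Cube z r) ≤ ν (Cube y (2*r)) := measure_mono hsub
      _ ≤ C * ν (Cube y r) := by rw [← hw, ← hw]; exact hD y r h1 h2
  -- chaining
  have chain : ∀ m : ℕ, ∀ y : Fin n → ℝ, dist y x ≤ l + r →
      dist y x ≤ m * r → ν (Cube y r) ≤ C^m * ν (Cube x r) := by
    intro m
    induction m with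
    | zero =>
      intro y _ h0
      rw [Nat.cast_zero, zero_mul] at h0
      have : y = x := by rwa [dist_le_zero] at h0
      simp [this]
    | succ m ih =>
      intro y hy1 hy2
      by_cases hc1 : dist y x ≤ m * r
      · exact (ih y hy1 hc1).trans
          (mul_le_mul_left (pow_le_pow_right₀ hC1 (Nat.le_succ m)) _)
      push_neg at hc1
      by_cases hc2 : dist y x ≤ r
      · have h1 := step x y (by simp [hl0.le, hr.le]; linarith) hc2
        refine h1.trans (mul_le_mul_left ?_ _)
        calc C = C^1 := (pow_one C).symm
          _ ≤ C^(m+1) := pow_le_pow_right₀ hC1 (by omega)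
      push_neg at hc2
      set t := dist y x with ht
      have ht0 : 0 < t := lt_trans hr hc2
      set c : ℝ := (t - r)/t with hcdef
      have hc0 : 0 ≤ c := div_nonneg (by linarith) ht0.le
      have hc1' : c ≤ 1 := by rw [div_le_one ht0]; linarith
      set y' : Fin n → ℝ := x + c • (y - x) with hy'
      have hyx : ‖y - x‖ = t := by rw [← dist_eq_norm]
      have hdy'x : dist y' x = c * t := by
        rw [dist_eq_norm]
        have : y' - x = c • (y - x) := by rw [hy']; abel
        rw [this, norm_smul, hyx, Real.norm_eq_abs, abs_of_nonneg hc0]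
      have hdyy' : dist y y' = r := by
        rw [dist_eq_norm]
        have : y - y' = (1 - c) • (y - x) := by
          rw [hy', sub_smul, one_smul]; abel
        rw [this, norm_smul, hyx, Real.norm_eq_abs, abs_of_nonneg (by linarith)]
        rw [hcdef]; field_simp; ring
      have hct : c * t = t - r := by rw [hcdef]; field_simp
      have hy'1 : dist y' x ≤ l + r := by rw [hdy'x, hct]; linarith
      have hy'2 : dist y' x ≤ m * r := by
        rw [hdy'x, hct]
        have : t ≤ (m+1) * r := by push_cast at hy2 ⊢; linarith
        linarith
      calc ν (Cube y r) ≤ C * ν (Cube y' r) := step y' y hy'1 hdyy'.le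
        _ ≤ C * (C^m * ν (Cube x r)) := mul_le_mul_right (ih y' hy'1 hy'2) _
        _ = C^(m+1) * ν (Cube x r) := by rw [pow_succ]; ring
  -- the grid
  classical
  set Z : Finset (Fin n → ℤ) :=
    Fintype.piFinset fun _ : Fin n => Finset.Icc (-(M:ℤ)) (M:ℤ) with hZ
  set pt : (Fin n → ℤ) → (Fin n → ℝ) := fun z i => x i + r * (z i) with hpt
  set Z' : Finset (Fin n → ℤ) := Z.filter (fun z => dist (pt z) x ≤ l + r) with hZ'
  have hne : α*(1-β) ≠ 0 := by positivity
  have hdr : (8/(α*(1-β))) * r = d := by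
    rw [hrdef]; field_simp
  have hMr : l + r ≤ M * r := by
    have h1 : (8/(α*(1-β)) + 1) * r ≤ (M:ℝ) * r :=
      mul_le_mul_of_nonneg_right hM hr.le
    nlinarith [hdr, hld]
  have cover : Cube x l ⊆ ⋃ z ∈ Z', Cube (pt z) r := by
    intro p hp
    have hpx : dist p x ≤ l := mem_closedBall.mp hp
    set z : Fin n → ℤ := fun i => round ((p i - x i)/r) with hz
    have hco : ∀ i, |p i - pt z i| ≤ r := by
      intro i
      have h1 : |(p i - x i)/r - (z i : ℝ)| ≤ 1/2 := by
        simp only [hz]; exact abs_sub_round _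
      have h2 : p i - pt z i = r * ((p i - x i)/r - (z i : ℝ)) := by
        simp only [hpt]; field_simp; ring
      rw [h2, abs_mul, abs_of_nonneg hr.le]; nlinarith
    have hdzp : dist (pt z) p ≤ r := by
      refine (dist_pi_le_iff hr.le).mpr fun i => ?_
      rw [Real.dist_eq, abs_sub_comm]; exact hco i
    have hzZ : z ∈ Z := by
      rw [hZ, Fintype.mem_piFinset]
      intro i
      rw [Finset.mem_Icc]
      have h1 : |(z i : ℝ)| ≤ (M:ℝ) := by
        have h2 : |(p i - x i)/r - (z i : ℝ)| ≤ 1/2 := by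
          simp only [hz]; exact abs_sub_round _
        have h3 : |p i - x i| ≤ l := by
          have := dist_le_pi_dist p x i
          rw [Real.dist_eq] at this; linarith
        have h4 : |(p i - x i)/r| ≤ l/r := by
          rw [abs_div, abs_of_nonneg hr.le]
          gcongr
        have h5 : l ≤ ((M:ℝ) - 1) * r := by nlinarith
        have h6 : l/r ≤ (M:ℝ) - 1 := by
          rw [div_le_iff₀ hr]; linarith
        calc |(z i : ℝ)| = |((z i : ℝ) - (p i - x i)/r) + (p i - x i)/r| := by ring_nf
          _ ≤ |(z i : ℝ) - (p i - x i)/r| + |(p i - x i)/r| := abs_add_le _ _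
          _ = |(p i - x i)/r - (z i:ℝ)| + |(p i - x i)/r| := by rw [abs_sub_comm]
          _ ≤ 1/2 + ((M:ℝ) - 1) := by linarith
          _ ≤ (M:ℝ) := by linarith
      constructor
      · exact_mod_cast neg_le_of_abs_le h1
      · exact_mod_cast le_of_abs_le h1
    have hzZ' : z ∈ Z' := by
      rw [hZ', Finset.mem_filter]
      refine ⟨hzZ, ?_⟩
      calc dist (pt z) x ≤ dist (pt z) p + dist p x := dist_triangle _ _ _
        _ ≤ r + l := add_le_add hdzp hpx
        _ = l + r := by ring
    refine Set.mem_biUnion hzZ' (mem_closedBall.mpr ?_)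
    exact (dist_pi_le_iff hr.le).mpr fun i => by
      rw [Real.dist_eq]; exact hco i
  have hptx : ∀ z ∈ Z', dist (pt z) x ≤ l + r := by
    intro z hzZ
    rw [hZ', Finset.mem_filter] at hzZ
    exact hzZ.2
  have hcard : (Z'.card : ℝ≥0∞) ≤ (((2*M+1)^n : ℕ) : ℝ≥0∞) := by
    have h1 : Z'.card ≤ Z.card := Finset.card_filter_le _ _
    have h2 : Z.card = (2*M+1)^n := by
      rw [hZ, Fintype.card_piFinset]
      simp only [Int.card_Icc]
      rw [Finset.prod_const, Finset.card_univ, Fintype.card_fin]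
      congr 1
      omega
    exact_mod_cast h2 ▸ h1
  have hfinal : ν (Cube x l) ≤ (((2*M+1)^n : ℕ) : ℝ≥0∞) * C^M * ν (Cube x r) := by
    calc ν (Cube x l) ≤ ν (⋃ z ∈ Z', Cube (pt z) r) := measure_mono cover
      _ ≤ ∑ z ∈ Z', ν (Cube (pt z) r) := measure_biUnion_finset_le _ _
      _ ≤ ∑ z ∈ Z', C^M * ν (Cube x r) := by
          refine Finset.sum_le_sum fun z hzZ => ?_
          exact chain M (pt z) (hptx z hzZ) ((hptx z hzZ).trans hMr)
      _ = (Z'.card : ℝ≥0∞) * (C^M * ν (Cube x r)) := by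
          rw [Finset.sum_const, nsmul_eq_mul]
      _ ≤ (((2*M+1)^n : ℕ) : ℝ≥0∞) * (C^M * ν (Cube x r)) :=
          mul_le_mul_left hcard _
      _ = (((2*M+1)^n : ℕ) : ℝ≥0∞) * C^M * ν (Cube x r) := by rw [mul_assoc]
  rw [hw, hw]
  exact hfinal

/-- Lemma 4.1: if `u ∈ D_α` and `σ = v^{-1/(p-1)} ∈ D_α`
with `0 < α < β < 1`, then `(u,v) ∈ A_{p,q}^β ↔ (u,v) ∈ A_{p,q}^α`. -/
theorem Apq_classes_coincide {n : ℕ} (Ω : Set (Fin n → ℝ))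
    (hΩo : IsOpen Ω) (hΩne : Ω.Nonempty) (hΩpr : Ω ≠ Set.univ)
    (p q α β : ℝ) (hp : 1 < p) (hpq : p ≤ q)
    (hα0 : 0 < α) (hαβ : α < β) (hβ1 : β < 1)
    (u v : (Fin n → ℝ) → ℝ) (hu : IsWeight Ω u) (hv : IsWeight Ω v)
    (huD : Dbeta Ω α u) (hσD : Dbeta Ω α (sigW v p)) :
    Apq Ω β p q u v ↔ Apq Ω α p q u v := by
  have hq0 : 0 < q := by linarith
  have hpq0 : 0 < p / q := div_pos (by linarith) hq0
  have hp1 : 0 < p - 1 := by linarith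
  have hdpos : ∀ x ∈ Ω, 0 < Metric.infDist x Ωᶜ := by
    intro x hx
    have hcne : (Ωᶜ : Set (Fin n → ℝ)).Nonempty := by
      rcases Set.eq_empty_or_nonempty Ωᶜ with h | h
      · exact absurd (Set.compl_empty_iff.mp h) hΩpr
      · exact h
    exact (hΩo.isClosed_compl.notMem_iff_infDist_pos hcne).mp (by simpa using hx)
  constructor
  · -- β ⟹ α : trivial since F_α ⊆ F_β
    rintro ⟨C, hC, h⟩
    refine ⟨C, hC, fun x l hm => ?_⟩
    obtain ⟨hx, hl0, hlα⟩ := hm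
    refine h x l ⟨hx, hl0, lt_of_lt_of_le hlα ?_⟩
    exact mul_le_mul_of_nonneg_right hαβ.le Metric.infDist_nonneg
  · -- α ⟹ β : the covering/chaining argument
    rintro ⟨Ca, hCa, hA⟩
    obtain ⟨Cu, hCu, hDu⟩ := huD
    obtain ⟨Cs, hCs, hDs⟩ := hσD
    set C0 : ℝ≥0∞ := max (max Cu Cs) 1 with hC0
    have hC01 : 1 ≤ C0 := le_max_right _ _
    have hC0top : C0 ≠ ⊤ := by
      rw [← lt_top_iff_ne_top]
      exact max_lt (max_lt hCu.lt_top hCs.lt_top) ENNReal.one_lt_top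
    set M : ℕ := ⌈8/(α*(1-β))⌉₊ + 1 with hM
    have hβ' : 0 < 1 - β := by linarith
    have hMle : 8/(α*(1-β)) + 1 ≤ (M:ℝ) := by
      rw [hM]
      push_cast
      have := Nat.le_ceil (8/(α*(1-β)))
      linarith
    set K : ℝ≥0∞ := (((2*M+1)^n : ℕ) : ℝ≥0∞) * C0^M with hK
    have hK1 : 1 ≤ K := by
      rw [hK]
      calc (1:ℝ≥0∞) = 1 * 1 := (one_mul 1).symm
        _ ≤ _ := mul_le_mul' (by exact_mod_cast Nat.one_le_iff_ne_zero.mpr (by positivity))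
            (one_le_pow_of_one_le' hC01 M)
    have hKtop : K ≠ ⊤ := ENNReal.mul_ne_top (ENNReal.natCast_ne_top _)
      (ENNReal.pow_ne_top hC0top)
    have hone : ∀ z : ℝ, 0 ≤ z → 1 ≤ K^z := by
      intro z hz
      calc (1:ℝ≥0∞) = 1^z := (ENNReal.one_rpow z).symm
        _ ≤ K^z := ENNReal.rpow_le_rpow hK1 hz
    refine ⟨K^(p/q) * K^(p-1) * Ca, ?_, ?_⟩
    · exact ENNReal.mul_ne_top (ENNReal.mul_ne_top
        (ENNReal.rpow_ne_top_of_nonneg hpq0.le hKtop)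
        (ENNReal.rpow_ne_top_of_nonneg hp1.le hKtop)) hCa
    intro x l hm
    obtain ⟨hx, hl0, hlβ'⟩ := hm
    have hd : 0 < Metric.infDist x Ωᶜ := hdpos x hx
    set d := Metric.infDist x Ωᶜ with hddef
    by_cases hcase : l < α * d
    · -- Q itself is in F_α
      have h1 := hA x l ⟨hx, hl0, hcase⟩
      calc _ ≤ Ca := h1
        _ ≤ K^(p/q) * K^(p-1) * Ca := by
            refine le_mul_of_one_le_left (by positivity) ?_
            calc (1:ℝ≥0∞) = 1 * 1 := (one_mul 1).symm
              _ ≤ _ := mul_le_mul' (hone _ hpq0.le) (hone _ hp1.le)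
    · push_neg at hcase
      set r : ℝ := α*(1-β)*d/8 with hrdef
      have hr : 0 < r := by positivity
      have hrl : r ≤ l := by nlinarith
      have hrα : r < α * d := by nlinarith
      have hmemr : MemF Ω α x r := ⟨hx, hr, hrα⟩
      have hvol : volume (Cube x r) ≤ volume (Cube x l) :=
        measure_mono (closedBall_subset_closedBall hrl)
      have hDu' : ∀ y t, MemF Ω α y t → MemF Ω α y (2*t) →
          wMeas u (Cube y (2*t)) ≤ C0 * wMeas u (Cube y t) := by
        intro y t h1 h2
        exact (hDu y t h1 h2).1.trans
          (mul_le_mul_left ((le_max_left Cu Cs).trans (le_max_left _ _)) _)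
      have hDs' : ∀ y t, MemF Ω α y t → MemF Ω α y (2*t) →
          wMeas (sigW v p) (Cube y (2*t)) ≤ C0 * wMeas (sigW v p) (Cube y t) := by
        intro y t h1 h2
        exact (hDs y t h1 h2).1.trans
          (mul_le_mul_left ((le_max_right Cu Cs).trans (le_max_left _ _)) _)
      have hbu : wMeas u (Cube x l) ≤ K * wMeas u (Cube x r) :=
        cover_bound Ω α β hα0 hαβ hβ1 u C0 hC01 hDu' M hMle x hx hd l hl0 hcase hlβ'
      have hbs : wMeas (sigW v p) (Cube x l) ≤ K * wMeas (sigW v p) (Cube x r) :=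
        cover_bound Ω α β hα0 hαβ hβ1 (sigW v p) C0 hC01 hDs' M hMle x hx hd l hl0
          hcase hlβ'
      have hq1 : wMeas u (Cube x l) / volume (Cube x l)
          ≤ K * (wMeas u (Cube x r) / volume (Cube x r)) := by
        calc wMeas u (Cube x l) / volume (Cube x l)
            ≤ (K * wMeas u (Cube x r)) / volume (Cube x r) :=
              ENNReal.div_le_div hbu hvol
          _ = K * (wMeas u (Cube x r) / volume (Cube x r)) := by rw [mul_div_assoc]
      have hq2 : wMeas (sigW v p) (Cube x l) / volume (Cube x l)
          ≤ K * (wMeas (sigW v p) (Cube x r) / volume (Cube x r)) := by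
        calc wMeas (sigW v p) (Cube x l) / volume (Cube x l)
            ≤ (K * wMeas (sigW v p) (Cube x r)) / volume (Cube x r) :=
              ENNReal.div_le_div hbs hvol
          _ = K * (wMeas (sigW v p) (Cube x r) / volume (Cube x r)) := by
              rw [mul_div_assoc]
      calc (wMeas u (Cube x l) / volume (Cube x l)) ^ (p/q) *
            (wMeas (sigW v p) (Cube x l) / volume (Cube x l)) ^ (p-1)
          ≤ (K * (wMeas u (Cube x r) / volume (Cube x r))) ^ (p/q) *
            (K * (wMeas (sigW v p) (Cube x r) / volume (Cube x r))) ^ (p-1) :=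
            mul_le_mul' (ENNReal.rpow_le_rpow hq1 hpq0.le)
              (ENNReal.rpow_le_rpow hq2 hp1.le)
        _ = (K^(p/q) * K^(p-1)) *
            ((wMeas u (Cube x r) / volume (Cube x r)) ^ (p/q) *
             (wMeas (sigW v p) (Cube x r) / volume (Cube x r)) ^ (p-1)) := by
            rw [ENNReal.mul_rpow_of_nonneg _ _ hpq0.le,
              ENNReal.mul_rpow_of_nonneg _ _ hp1.le]
            ring
        _ ≤ (K^(p/q) * K^(p-1)) * Ca := mul_le_mul_right (hA x r hmemr) _
        _ = K^(p/q) * K^(p-1) * Ca := by rw [mul_assoc]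
end
end
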